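/- arXiv:1101.3677 — 8 statements merged into one kernel-verified Lean document; each statement's English description precedes it below -/
import Mathlib

section
/- For any two increasing functions f, g : [0,∞) → [0,∞) with f(x) → ∞ and g(x) → ∞ as x → ∞, there exist δ > 0, x₁ ≥ 0, and a continuous, increasing, concave function v : [0,∞) → [0,∞) with v(0) = 0 and v(x) → ∞ as x → ∞, such that v(f(x)) ≥ δ·v(g(x)) for every x ≥ x₁; moreover v can be chosen so that x/v(x) → ∞ as x → ∞. -/
open Set Filter

set_option linter.unusedSectionVars false
set_option linter.unusedVariables false
set_option maxHeartbeats 1000000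

private lemma min_lip (a b c : ℝ) : |min a c - min b c| ≤ |a - b| := by
  rcases le_total a c with h1 | h1 <;> rcases le_total b c with h2 | h2 <;>
    rw [abs_le] <;>
    simp only [min_eq_left, min_eq_right, h1, h2] <;>
    constructor <;>
    cases abs_cases (a - b) <;> linarith

private lemma geo_summable : Summable (fun k : ℕ => ((1:ℝ)/2) ^ (k+1)) := by
  have : Summable (fun k : ℕ => (1/2 : ℝ) ^ k) :=
    summable_geometric_of_lt_one (by norm_num) (by norm_num)
  simpa [pow_succ] using this.mul_right (1/2 : ℝ)

private lemma geo_tsum : ∑' k : ℕ, ((1:ℝ)/2) ^ (k+1) = 1 := by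
  have h : ∑' k : ℕ, ((1:ℝ)/2) ^ k = 2 := by
    rw [tsum_geometric_of_lt_one (by norm_num) (by norm_num)]; norm_num
  calc ∑' k : ℕ, ((1:ℝ)/2) ^ (k+1) = ∑' k : ℕ, ((1:ℝ)/2) ^ k * (1/2) := by
        simp only [pow_succ]
    _ = 2 * (1/2) := by rw [tsum_mul_right, h]
    _ = 1 := by norm_num

section VV

variable (c : ℕ → ℝ)

noncomputable def vvF : ℝ → ℝ := fun x => ∑' k, min x (c k) / c k

variable (hc0 : 2 ≤ c 0) (hcd : ∀ k, 2 * c k ≤ c (k + 1))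

include hc0 hcd

private lemma cgrow : ∀ n k, 2 ^ k * c n ≤ c (n + k) := by
  intro n k
  induction k with
  | zero => simp
  | succ k ih =>
      have h1 := hcd (n + k)
      calc 2 ^ (k+1) * c n = 2 * (2 ^ k * c n) := by ring
        _ ≤ 2 * c (n + k) := by linarith
        _ ≤ c (n + (k+1)) := by rw [← Nat.add_assoc]; exact h1

private lemma cge : ∀ k, 2 ^ (k+1) ≤ c k := by
  intro k
  have h := cgrow c hc0 hcd 0 k
  simp only [Nat.zero_add] at h
  have h2 : (0:ℝ) < 2 ^ k := by positivity
  calc (2:ℝ) ^ (k+1) = 2 ^ k * 2 := by ring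
    _ ≤ 2 ^ k * c 0 := by nlinarith
    _ ≤ c k := h

private lemma cpos : ∀ k, 0 < c k := by
  intro k
  have := cge c hc0 hcd k
  have h2 : (0:ℝ) < 2 ^ (k+1) := by positivity
  linarith

private lemma cmono : Monotone c := by
  apply monotone_nat_of_le_succ
  intro n
  have := hcd n
  have := cpos c hc0 hcd n
  linarith

private lemma cinv : ∀ k, 1 / c k ≤ (1/2) ^ (k+1) := by
  intro k
  have h1 := cge c hc0 hcd k
  have h2 : (0:ℝ) < 2 ^ (k+1) := by positivity
  rw [div_pow, one_pow]
  exact one_div_le_one_div_of_le (by positivity) h1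

private lemma term_abs (x : ℝ) (k : ℕ) : ‖min x (c k) / c k‖ ≤ |x| * (1/2) ^ (k+1) := by
  have hk := cpos c hc0 hcd k
  have h1 : |min x (c k)| ≤ |x| := by
    rcases le_total x (c k) with h | h
    · simp [min_eq_left h]
    · rw [min_eq_right h, abs_of_pos hk, abs_of_nonneg (by linarith : (0:ℝ) ≤ x)]
      exact h
  calc ‖min x (c k) / c k‖ = |min x (c k)| * (1 / c k) := by
        rw [Real.norm_eq_abs, abs_div, abs_of_pos hk, div_eq_mul_one_div]
    _ ≤ |x| * (1/2) ^ (k+1) :=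
        mul_le_mul h1 (cinv c hc0 hcd k) (by positivity) (abs_nonneg x)

private lemma summable_term (x : ℝ) : Summable (fun k => min x (c k) / c k) :=
  Summable.of_norm_bounded (geo_summable.mul_left |x|)
    (term_abs c hc0 hcd x)

private lemma vv_lip : LipschitzWith 1 (vvF c) := by
  rw [lipschitzWith_iff_dist_le_mul]
  intro x y
  simp only [Real.dist_eq, NNReal.coe_one, one_mul, vvF]
  rw [← Summable.tsum_sub (summable_term c hc0 hcd x) (summable_term c hc0 hcd y)]
  have hsum : Summable (fun k : ℕ => |x - y| * (1/2) ^ (k+1)) :=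
    geo_summable.mul_left _
  have hbound : ∀ k : ℕ, ‖min x (c k) / c k - min y (c k) / c k‖ ≤ |x - y| * (1/2) ^ (k+1) := by
    intro k
    have hk := cpos c hc0 hcd k
    rw [div_sub_div_same, Real.norm_eq_abs, abs_div, abs_of_pos hk, div_eq_mul_one_div]
    exact mul_le_mul (min_lip x y (c k)) (cinv c hc0 hcd k) (by positivity) (abs_nonneg _)
  have hsn : Summable (fun k : ℕ => ‖min x (c k) / c k - min y (c k) / c k‖) :=
    Summable.of_nonneg_of_le (fun k => norm_nonneg _) hbound hsum
  calc |∑' k, (min x (c k) / c k - min y (c k) / c k)|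
      ≤ ∑' k, ‖min x (c k) / c k - min y (c k) / c k‖ := norm_tsum_le_tsum_norm hsn
    _ ≤ ∑' k : ℕ, |x - y| * (1/2) ^ (k+1) := Summable.tsum_le_tsum hbound hsn hsum
    _ = |x - y| * 1 := by rw [tsum_mul_left, geo_tsum]
    _ = |x - y| := by ring

private lemma vv_mono : Monotone (vvF c) := by
  intro x y hxy
  apply Summable.tsum_le_tsum _ (summable_term c hc0 hcd x) (summable_term c hc0 hcd y)
  intro k
  have hk := cpos c hc0 hcd k
  gcongr

private lemma vv_nonneg (x : ℝ) (hx : 0 ≤ x) : 0 ≤ vvF c x := by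
  apply tsum_nonneg
  intro k
  have := cpos c hc0 hcd k
  positivity

private lemma vv_zero : vvF c 0 = 0 := by
  have h : ∀ k : ℕ, min (0:ℝ) (c k) / c k = 0 := by
    intro k
    rw [min_eq_left (le_of_lt (cpos c hc0 hcd k)), zero_div]
  simp only [vvF, h, tsum_zero]

private lemma vv_smono : StrictMonoOn (vvF c) (Ici 0) := by
  intro x hx y hy hxy
  obtain ⟨n, hn⟩ := exists_nat_ge y
  have hcn : y < c n := by
    have h1 := cge c hc0 hcd n
    have h2 : (n:ℝ) < 2 ^ n := by exact_mod_cast Nat.lt_two_pow_self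
    have h3 : (2:ℝ) ^ n ≤ 2 ^ (n+1) := by
      apply pow_le_pow_right₀ (by norm_num) (by omega)
    linarith
  apply Summable.tsum_lt_tsum (i := n) _ _ (summable_term c hc0 hcd x) (summable_term c hc0 hcd y)
  · intro k
    have hk := cpos c hc0 hcd k
    show min x (c k) / c k ≤ min y (c k) / c k
    gcongr
  · have hk := cpos c hc0 hcd n
    rw [min_eq_left (le_of_lt (lt_trans hxy hcn)), min_eq_left (le_of_lt hcn)]
    gcongr

private lemma vv_lower (m : ℕ) : (m : ℝ) + 1 ≤ vvF c (c m) := by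
  have h := Summable.sum_le_tsum (Finset.range (m+1))
    (fun k _ => by
      have h1 := cpos c hc0 hcd k
      have h2 := cpos c hc0 hcd m
      positivity)
    (summable_term c hc0 hcd (c m))
  refine le_trans ?_ h
  have he : ∀ k ∈ Finset.range (m+1), min (c m) (c k) / c k = 1 := by
    intro k hk
    rw [Finset.mem_range] at hk
    rw [min_eq_right (cmono c hc0 hcd (Nat.lt_succ_iff.mp hk)),
      div_self (ne_of_gt (cpos c hc0 hcd k))]
  rw [Finset.sum_congr rfl he]
  simp

private lemma vv_upper (n : ℕ) (x : ℝ) (hx : 0 ≤ x) : vvF c x ≤ (n : ℝ) + 1 + x / c n := by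
  have hsum := summable_term c hc0 hcd x
  rw [vvF]
  rw [← Summable.sum_add_tsum_nat_add (n+1) hsum]
  have h1 : ∑ k ∈ Finset.range (n+1), min x (c k) / c k ≤ (n : ℝ) + 1 := by
    calc ∑ k ∈ Finset.range (n+1), min x (c k) / c k
        ≤ ∑ _k ∈ Finset.range (n+1), (1:ℝ) := by
          apply Finset.sum_le_sum
          intro k _
          have := cpos c hc0 hcd k
          rw [div_le_one this]
          exact min_le_right _ _
      _ = (n : ℝ) + 1 := by simp
  have h2 : ∑' k : ℕ, min x (c (k + (n+1))) / c (k + (n+1)) ≤ x / c n := by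
    have hp2 := cpos c hc0 hcd (n+1)
    have hpn := cpos c hc0 hcd n
    have hterm : ∀ k : ℕ, min x (c (k + (n+1))) / c (k + (n+1)) ≤ x / c (n+1) * (1/2) ^ k := by
      intro k
      have hp1 := cpos c hc0 hcd (k + (n+1))
      have hg : 2 ^ k * c (n+1) ≤ c (k + (n+1)) := by
        rw [Nat.add_comm k (n+1)]
        exact cgrow c hc0 hcd (n+1) k
      have e : x / c (n+1) * ((1:ℝ)/2) ^ k = x / (2 ^ k * c (n+1)) := by
        rw [div_pow, one_pow, div_mul_div_comm, mul_one, mul_comm]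
      rw [e]
      calc min x (c (k + (n+1))) / c (k + (n+1)) ≤ x / c (k + (n+1)) := by
            gcongr
            exact min_le_left _ _
        _ ≤ x / (2 ^ k * c (n+1)) := by
            have h0 : (0:ℝ) < 2 ^ k * c (n+1) := mul_pos (by positivity) hp2
            gcongr
    have hs1 : Summable (fun k : ℕ => min x (c (k + (n+1))) / c (k + (n+1))) :=
      (summable_nat_add_iff (n+1)).mpr hsum
    have hs2 : Summable (fun k : ℕ => x / c (n+1) * (1/2) ^ k) :=
      (summable_geometric_of_lt_one (by norm_num) (by norm_num)).mul_left _
    calc ∑' k : ℕ, min x (c (k + (n+1))) / c (k + (n+1))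
        ≤ ∑' k : ℕ, x / c (n+1) * (1/2) ^ k := Summable.tsum_le_tsum hterm hs1 hs2
      _ = x / c (n+1) * 2 := by
          rw [tsum_mul_left, tsum_geometric_of_lt_one (by norm_num) (by norm_num)]
          norm_num
      _ = 2 * x / c (n+1) := by ring
      _ ≤ 2 * x / (2 * c n) := by
          have h0 : (0:ℝ) < 2 * c n := by linarith
          gcongr
          exact hcd n
      _ = x / c n := by rw [mul_div_mul_left _ _ (by norm_num : (2:ℝ) ≠ 0)]
  linarith

private lemma vv_concave : ConcaveOn ℝ (Ici 0) (vvF c) := by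
  refine ⟨convex_Ici 0, ?_⟩
  intro x _ y _ a b ha hb hab
  simp only [smul_eq_mul, vvF]
  have hsx := summable_term c hc0 hcd x
  have hsy := summable_term c hc0 hcd y
  rw [← tsum_mul_left, ← tsum_mul_left, ← Summable.tsum_add (hsx.mul_left a) (hsy.mul_left b)]
  apply Summable.tsum_le_tsum _ ((hsx.mul_left a).add (hsy.mul_left b)) (summable_term c hc0 hcd _)
  intro k
  have hk := cpos c hc0 hcd k
  have key : a * min x (c k) + b * min y (c k) ≤ min (a * x + b * y) (c k) := by
    apply le_min
    · have h1 := mul_le_mul_of_nonneg_left (min_le_left x (c k)) ha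
      have h2 := mul_le_mul_of_nonneg_left (min_le_left y (c k)) hb
      linarith
    · have h1 := mul_le_mul_of_nonneg_left (min_le_right x (c k)) ha
      have h2 := mul_le_mul_of_nonneg_left (min_le_right y (c k)) hb
      nlinarith
  calc a * (min x (c k) / c k) + b * (min y (c k) / c k)
      = (a * min x (c k) + b * min y (c k)) / c k := by ring
    _ ≤ min (a * x + b * y) (c k) / c k := by gcongr

private lemma vv_top : Tendsto (vvF c) atTop atTop := by
  rw [tendsto_atTop_atTop]
  intro b
  obtain ⟨m, hm⟩ := exists_nat_ge b
  refine ⟨c m, fun x hx => ?_⟩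
  have h1 := vv_lower c hc0 hcd m
  have h2 := vv_mono c hc0 hcd hx
  linarith

private lemma vv_ratio : Tendsto (fun x => x / vvF c x) atTop atTop := by
  rw [tendsto_atTop_atTop]
  intro M0
  set M := max M0 1 with hM
  have hM1 : 1 ≤ M := le_max_right _ _
  obtain ⟨n, hn⟩ := exists_nat_ge (4*M)
  have hcn : 4*M ≤ c n := by
    have h1 := cge c hc0 hcd n
    have h2 : (n:ℝ) < 2^n := by exact_mod_cast Nat.lt_two_pow_self
    have h3 : (2:ℝ)^n ≤ 2^(n+1) := pow_le_pow_right₀ (by norm_num) (by omega)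
    linarith
  refine ⟨max (c 0) (4*M*((n:ℝ)+1)), fun x hx => ?_⟩
  have hx0 : c 0 ≤ x := le_trans (le_max_left _ _) hx
  have hx1 : 4*M*((n:ℝ)+1) ≤ x := le_trans (le_max_right _ _) hx
  have hxpos : 0 < x := by linarith
  have hvpos : 0 < vvF c x := by
    have h1 := vv_lower c hc0 hcd 0
    have h2 := vv_mono c hc0 hcd hx0
    simp only [Nat.cast_zero, zero_add] at h1
    linarith
  have hMpos : (0:ℝ) < 4*M := by linarith
  have hub : vvF c x ≤ x / (2*M) := by
    have h := vv_upper c hc0 hcd n x (le_of_lt hxpos)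
    have h2 : x / c n ≤ x / (4*M) := by gcongr
    have h3 : (n:ℝ)+1 ≤ x/(4*M) := by
      rw [le_div_iff₀ hMpos]
      nlinarith
    calc vvF c x ≤ (n:ℝ)+1 + x / c n := h
      _ ≤ x/(4*M) + x/(4*M) := by linarith
      _ = x/(2*M) := by
          field_simp
          ring
  have hfin : M * vvF c x ≤ x := by
    have h4 := mul_le_mul_of_nonneg_left hub (by linarith : (0:ℝ) ≤ M)
    have h5 : M * (x/(2*M)) = x/2 := by
      field_simp
    linarith
  have : M ≤ x / vvF c x := (le_div_iff₀ hvpos).mpr hfin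
  linarith [le_max_left M0 (1:ℝ)]

end VV

/-- For any two increasing functions `f, g : [0,∞) → [0,∞)` tending to `+∞`
at `+∞`, there exist `δ > 0`, `x₁ ≥ 0` and a continuous, increasing, concave function
`v : [0,∞) → [0,∞)` with `v 0 = 0` and `v → ∞` at `∞`, such that `v (f x) ≥ δ * v (g x)`
for every `x ≥ x₁`; moreover `v` may be chosen with `x / v x → ∞` as `x → ∞`. -/
theorem stmt0 (f g : ℝ → ℝ)
    (hfmono : MonotoneOn f (Ici 0)) (hgmono : MonotoneOn g (Ici 0))
    (hfmaps : MapsTo f (Ici 0) (Ici 0)) (hgmaps : MapsTo g (Ici 0) (Ici 0))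
    (hftop : Tendsto f atTop atTop) (hgtop : Tendsto g atTop atTop) :
    ∃ δ > (0:ℝ), ∃ x₁ ≥ (0:ℝ), ∃ v : ℝ → ℝ,
      ContinuousOn v (Ici 0) ∧ StrictMonoOn v (Ici 0) ∧ ConcaveOn ℝ (Ici 0) v ∧
      MapsTo v (Ici 0) (Ici 0) ∧ v 0 = 0 ∧ Tendsto v atTop atTop ∧
      (∀ x ≥ x₁, δ * v (g x) ≤ v (f x)) ∧
      Tendsto (fun x => x / v x) atTop atTop := by
  obtain ⟨N, hN⟩ : ∃ N : ℝ → ℝ, ∀ y, ∀ x, N y ≤ x → y ≤ f x := by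
    have h := fun y : ℝ => eventually_atTop.mp (hftop.eventually_ge_atTop y)
    choose N hN using h
    exact ⟨N, fun y x hx => hN y x hx⟩
  let p : ℕ → ℝ × ℝ := fun n => Nat.rec ((0:ℝ), (2:ℝ))
    (fun _ q => (max (q.1 + 1) (N q.2), max (2 * q.2) (g (max (q.1 + 1) (N q.2))))) n
  let t : ℕ → ℝ := fun n => (p n).1
  let c : ℕ → ℝ := fun n => (p n).2
  have ht0 : t 0 = 0 := rfl
  have hc0 : (2:ℝ) ≤ c 0 := le_refl 2
  have htstep : ∀ k, t k + 1 ≤ t (k+1) := fun k => le_max_left _ _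
  have hNle : ∀ k, N (c k) ≤ t (k+1) := fun k => le_max_right _ _
  have hgle : ∀ k, g (t (k+1)) ≤ c (k+1) := fun k => le_max_right _ _
  have hcd : ∀ k, 2 * c k ≤ c (k+1) := fun k => le_max_left _ _
  have hfge : ∀ k x, t (k+1) ≤ x → c k ≤ f x :=
    fun k x hx => hN (c k) x (le_trans (hNle k) hx)
  have htk : ∀ k : ℕ, (k:ℝ) ≤ t k := by
    intro k
    induction k with
    | zero => simp [ht0]
    | succ k ih =>
        have := htstep k
        push_cast
        linarith
  have htnn : ∀ k, 0 ≤ t k := fun k => le_trans (by positivity) (htk k)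
  refine ⟨1/4, by norm_num, t 1, by linarith [htk 1], vvF c,
    (vv_lip c hc0 hcd).continuous.continuousOn, vv_smono c hc0 hcd,
    vv_concave c hc0 hcd, fun x hx => vv_nonneg c hc0 hcd x hx,
    vv_zero c hc0 hcd, vv_top c hc0 hcd, ?_, vv_ratio c hc0 hcd⟩
  intro x hx
  have hx0 : (0:ℝ) ≤ x := by linarith [htk 1]
  have hex : ∃ m, x < t m := by
    obtain ⟨m, hm⟩ := exists_nat_gt x
    exact ⟨m, lt_of_lt_of_le hm (htk m)⟩
  set m := Nat.find hex with hmdef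
  have hm : x < t m := Nat.find_spec hex
  have hm2 : 2 ≤ m := by
    by_contra h
    push_neg at h
    interval_cases m
    · rw [ht0] at hm; linarith
    · linarith
  set k := m - 1 with hkdef
  have hk : k + 1 = m := by omega
  have hk1 : 1 ≤ k := by omega
  have htkx : t k ≤ x := by
    have := Nat.find_min hex (show k < m by omega)
    exact le_of_not_gt this
  have hxlt : x < t (k+1) := by rw [hk]; exact hm
  -- lower bound on f x
  have hfx : c (k-1) ≤ f x := by
    have hkk : (k-1) + 1 = k := by omega
    apply hfge (k-1) x
    rw [hkk]
    exact htkx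
  -- upper bound on g x
  have hgx : g x ≤ c (k+1) := by
    refine le_trans ?_ (hgle k)
    exact hgmono hx0 (htnn (k+1)) (le_of_lt hxlt)
  -- bounds on v
  have hvf : ((k-1 : ℕ):ℝ) + 1 ≤ vvF c (f x) :=
    le_trans (vv_lower c hc0 hcd (k-1)) (vv_mono c hc0 hcd hfx)
  have hvg : vvF c (g x) ≤ ((k+1 : ℕ):ℝ) + 1 + 1 := by
    have h1 : vvF c (g x) ≤ vvF c (c (k+1)) := vv_mono c hc0 hcd hgx
    have hp := cpos c hc0 hcd (k+1)
    have h2 := vv_upper c hc0 hcd (k+1) (c (k+1)) (le_of_lt hp)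
    rw [div_self (ne_of_gt hp)] at h2
    linarith
  have hcast : ((k-1 : ℕ):ℝ) = (k:ℝ) - 1 := by
    push_cast [hk1]
    ring
  have hkr : (1:ℝ) ≤ (k:ℝ) := by exact_mod_cast hk1
  rw [hcast] at hvf
  push_cast at hvg
  linarith
end

section
/- Let N ≥ 1 be an integer and let m : (0,1) → [0,∞) be nondecreasing. If for every Orlicz function ψ and every A > 0 there exists h₀ ∈ (0,1) such that m(h) ≤ 1/ψ(A·ψ⁻¹(1/h^N)) for all 0 < h < h₀, then there exists h₁ ∈ (0,1) such that m(h) = 0 for all 0 < h ≤ h₁. -/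
open Set Filter

/-- An Orlicz function: a strictly convex function `psi : [0,oo) -> [0,oo)` with `psi 0 = 0`,
`psi` continuous at `0`, and `psi x / x -> oo` as `x -> oo`. -/
def OrliczFunction (ψ : ℝ → ℝ) : Prop :=
  StrictConvexOn ℝ (Ici 0) ψ ∧ (∀ x ∈ Ici (0:ℝ), 0 ≤ ψ x) ∧ ψ 0 = 0 ∧
    ContinuousWithinAt ψ (Ici 0) 0 ∧ Tendsto (fun x => ψ x / x) atTop atTop

/-- `ψinv` is the inverse of the Orlicz function `ψ`, viewed as an increasing bijection
of `[0,oo)` onto itself. -/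
def OrliczInverse (ψ ψinv : ℝ → ℝ) : Prop :=
  (∀ x, 0 ≤ x → ψinv (ψ x) = x) ∧ (∀ y, 0 ≤ y → ψ (ψinv y) = y) ∧ (∀ y, 0 ≤ y → 0 ≤ ψinv y)

/-- The nabla_0-condition. -/
def Nabla0 (ψ : ℝ → ℝ) : Prop :=
  ∀ B > (1:ℝ), ∃ C ≥ (1:ℝ), ∃ x₀ > (0:ℝ), ∀ x y : ℝ, x₀ ≤ x → x ≤ y →
    ψ (B * x) / ψ x ≤ ψ (C * B * y) / ψ y

/-- The uniform nabla_0-condition. -/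
def UniformNabla0 (ψ : ℝ → ℝ) : Prop :=
  ∃ C ≥ (1:ℝ), ∀ B > (1:ℝ), ∃ x₀ > (0:ℝ), ∀ x y : ℝ, x₀ ≤ x → x ≤ y →
    ψ (B * x) / ψ x ≤ ψ (C * B * y) / ψ y

/-- The nabla_2-condition. -/
def Nabla2 (ψ : ℝ → ℝ) : Prop :=
  ∃ β > (1:ℝ), ∃ x₀ > (0:ℝ), ∀ x ≥ x₀, 2 * β * ψ x ≤ ψ (β * x)

/-- The Delta_2-condition. -/
def Delta2 (ψ : ℝ → ℝ) : Prop :=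
  ∃ K > (1:ℝ), ∃ x₀ > (0:ℝ), ∀ x ≥ x₀, ψ (2 * x) ≤ K * ψ x

/-- The Delta^2-condition. -/
def DeltaSquare (ψ : ℝ → ℝ) : Prop :=
  ∃ C > (0:ℝ), ∃ x₀ > (0:ℝ), ∀ x ≥ x₀, (ψ x) ^ 2 ≤ ψ (C * x)



noncomputable section OrliczAux

variable (m : ℝ → ℝ) (N : ℕ)

def auxC (Lk : ℝ) (k : ℕ) : ℝ :=
  |Real.log (1 + |(m (((k:ℝ)^2 + Real.exp Lk - 1) ^ (-(N:ℝ)⁻¹)))⁻¹|)|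

def auxP : ℕ → ℝ × ℝ
  | 0 => (0, 0)
  | k+1 => ((auxP k).1 + (auxP k).2 + auxC m N (auxP k).1 k,
            (auxP k).2 + auxC m N (auxP k).1 k)

def cseq (k : ℕ) : ℝ := auxC m N (auxP m N k).1 k

def Lfun (x : ℝ) : ℝ := ∑ j ∈ Finset.range ⌈x⌉₊, cseq m N j * (x - j)

def psiF (x : ℝ) : ℝ := x ^ 2 + Real.exp (Lfun m N x) - 1

lemma cseq_nonneg (k : ℕ) : 0 ≤ cseq m N k := abs_nonneg _

lemma Lrep (M : ℕ) (x : ℝ) (hx : x ≤ M) :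
    Lfun m N x = ∑ j ∈ Finset.range M, cseq m N j * max (x - j) 0 := by
  have h1 : Lfun m N x = ∑ j ∈ Finset.range ⌈x⌉₊, cseq m N j * max (x - j) 0 := by
    refine Finset.sum_congr rfl fun j hj => ?_
    have hj' : (j:ℝ) < x := Nat.lt_ceil.1 (Finset.mem_range.1 hj)
    rw [max_eq_left (by linarith)]
  rw [h1]
  refine Finset.sum_subset (Finset.range_subset_range.2 (Nat.ceil_le.2 hx)) fun j _ hj' => ?_
  have hx2 : x ≤ j := by
    have h2 : ⌈x⌉₊ ≤ j := le_of_not_gt fun h => hj' (Finset.mem_range.2 h)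
    calc x ≤ (⌈x⌉₊ : ℝ) := Nat.le_ceil x
    _ ≤ j := by exact_mod_cast h2
  rw [max_eq_right (by linarith), mul_zero]

lemma Lfun_mono : Monotone (Lfun m N) := by
  intro x y hxy
  have hxM : x ≤ (⌈y⌉₊ : ℝ) := hxy.trans (Nat.le_ceil y)
  rw [Lrep m N ⌈y⌉₊ x hxM, Lrep m N ⌈y⌉₊ y (Nat.le_ceil y)]
  exact Finset.sum_le_sum fun j _ =>
    mul_le_mul_of_nonneg_left (max_le_max (by linarith) le_rfl) (cseq_nonneg m N j)

lemma Lfun_zero : Lfun m N 0 = 0 := by simp [Lfun]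

lemma Lfun_cvx (x y a b : ℝ) (ha : 0 ≤ a) (hb : 0 ≤ b) (hab : a + b = 1) :
    Lfun m N (a*x + b*y) ≤ a * Lfun m N x + b * Lfun m N y := by
  set M := ⌈max x y⌉₊ with hM
  have hxM : x ≤ (M:ℝ) := (le_max_left x y).trans (Nat.le_ceil _)
  have hyM : y ≤ (M:ℝ) := (le_max_right x y).trans (Nat.le_ceil _)
  have hzM : a*x + b*y ≤ (M:ℝ) := by nlinarith
  rw [Lrep m N M _ hzM, Lrep m N M x hxM, Lrep m N M y hyM, Finset.mul_sum,
    Finset.mul_sum, ← Finset.sum_add_distrib]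
  refine Finset.sum_le_sum fun j _ => ?_
  have h1 : max (a*x + b*y - j) 0 ≤ a * max (x - j) 0 + b * max (y - j) 0 := by
    refine max_le ?_ (by positivity)
    nlinarith [mul_le_mul_of_nonneg_left (le_max_left (x - (j:ℝ)) 0) ha,
      mul_le_mul_of_nonneg_left (le_max_left (y - (j:ℝ)) 0) hb]
  calc cseq m N j * max (a*x+b*y - j) 0
      ≤ cseq m N j * (a * max (x-j) 0 + b * max (y-j) 0) :=
        mul_le_mul_of_nonneg_left h1 (cseq_nonneg m N j)
    _ = a * (cseq m N j * max (x-j) 0) + b * (cseq m N j * max (y-j) 0) := by ring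

lemma Lfun_cont : Continuous (Lfun m N) := by
  rw [continuous_iff_continuousAt]
  intro x
  have hx : x < ((⌈x⌉₊ + 1 : ℕ) : ℝ) :=
    lt_of_le_of_lt (Nat.le_ceil x) (by exact_mod_cast Nat.lt_succ_self _)
  have hF : Continuous (fun z : ℝ => ∑ j ∈ Finset.range (⌈x⌉₊+1), cseq m N j * max (z - (j:ℝ)) 0) :=
    continuous_finset_sum _ fun j _ =>
      continuous_const.mul ((continuous_id.sub continuous_const).max continuous_const)
  refine hF.continuousAt.congr ?_
  filter_upwards [Iio_mem_nhds hx] with z hz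
  exact (Lrep m N _ z (le_of_lt hz)).symm

lemma Lfun_nat (k : ℕ) : Lfun m N k = (auxP m N k).1 ∧
    (∑ j ∈ Finset.range k, cseq m N j) = (auxP m N k).2 := by
  induction k with
  | zero => simp [Lfun, auxP]
  | succ k ih =>
    obtain ⟨ih1, ih2⟩ := ih
    have h3 : ∑ j ∈ Finset.range k, cseq m N j * ((k:ℝ) - j) = Lfun m N k := by
      unfold Lfun; rw [Nat.ceil_natCast]
    constructor
    · have h1 : Lfun m N ((k+1 : ℕ) : ℝ)
          = ∑ j ∈ Finset.range (k+1), cseq m N j * (((k+1:ℕ):ℝ) - j) := by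
        unfold Lfun; rw [Nat.ceil_natCast]
      rw [h1]
      have h2 : ∀ j ∈ Finset.range (k+1),
          cseq m N j * (((k+1:ℕ):ℝ) - j) = cseq m N j * ((k:ℝ) - j) + cseq m N j := by
        intro j _; push_cast; ring
      rw [Finset.sum_congr rfl h2, Finset.sum_add_distrib,
        Finset.sum_range_succ (fun j => cseq m N j * ((k:ℝ) - j)), h3,
        Finset.sum_range_succ (cseq m N), ih1, ih2]
      show _ = (auxP m N (k+1)).1
      simp only [auxP, cseq]
      ring
    · rw [Finset.sum_range_succ, ih2]
      show _ = (auxP m N (k+1)).2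
      simp only [auxP, cseq]

lemma cseq_le_Lfun (k : ℕ) : cseq m N k ≤ Lfun m N ((k:ℝ)+1) := by
  have hcast : ((k:ℝ)+1) = ((k+1:ℕ):ℝ) := by push_cast; ring
  rw [hcast]
  have h1 : Lfun m N ((k+1:ℕ):ℝ)
      = ∑ j ∈ Finset.range (k+1), cseq m N j * (((k+1:ℕ):ℝ) - j) := by
    unfold Lfun; rw [Nat.ceil_natCast]
  rw [h1]
  have h2 := Finset.single_le_sum (f := fun j => cseq m N j * (((k+1:ℕ):ℝ) - j))
    (fun j hj => mul_nonneg (cseq_nonneg m N j) (by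
      have := Finset.mem_range.1 hj
      have : (j:ℝ) < (k+1:ℕ) := by exact_mod_cast this
      linarith)) (Finset.self_mem_range_succ k)
  calc cseq m N k = cseq m N k * (((k+1:ℕ):ℝ) - k) := by push_cast; ring
    _ ≤ _ := h2

lemma psiF_lower (x : ℝ) (hx : 0 ≤ x) : x^2 ≤ psiF m N x := by
  have h1 : Lfun m N 0 ≤ Lfun m N x := Lfun_mono m N hx
  rw [Lfun_zero] at h1
  have h2 : Real.exp 0 ≤ Real.exp (Lfun m N x) := Real.exp_le_exp.2 h1
  rw [Real.exp_zero] at h2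
  unfold psiF; linarith

lemma psiF_zero : psiF m N 0 = 0 := by
  simp [psiF, Lfun_zero]

lemma psiF_strictMono : StrictMonoOn (psiF m N) (Ici 0) := by
  intro x hx y hy hxy
  have hx0 : (0:ℝ) ≤ x := hx
  have h1 : x^2 < y^2 := by nlinarith
  have h2 : Real.exp (Lfun m N x) ≤ Real.exp (Lfun m N y) :=
    Real.exp_le_exp.2 (Lfun_mono m N hxy.le)
  unfold psiF; linarith

lemma psiF_cont : Continuous (psiF m N) := by
  unfold psiF
  exact ((continuous_pow 2).add (Real.continuous_exp.comp (Lfun_cont m N))).sub continuous_const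

lemma psiF_strictConvex : StrictConvexOn ℝ (Ici 0) (psiF m N) := by
  refine ⟨convex_Ici 0, fun x _ y _ hne a b ha hb hab => ?_⟩
  simp only [smul_eq_mul]
  have hsq : 0 < (x - y)^2 :=
    lt_of_le_of_ne (sq_nonneg _) (Ne.symm (pow_ne_zero 2 (sub_ne_zero.2 hne)))
  have hident : a*x^2 + b*y^2 - (a*x+b*y)^2 = a*b*(x-y)^2 := by
    have hb' : b = 1 - a := by linarith
    rw [hb']; ring
  have h1 : (a*x + b*y)^2 < a*x^2 + b*y^2 := by
    nlinarith [mul_pos (mul_pos ha hb) hsq]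
  have h2 : Real.exp (Lfun m N (a*x+b*y))
      ≤ a * Real.exp (Lfun m N x) + b * Real.exp (Lfun m N y) := by
    calc Real.exp (Lfun m N (a*x+b*y)) ≤ Real.exp (a * Lfun m N x + b * Lfun m N y) :=
        Real.exp_le_exp.2 (Lfun_cvx m N x y a b ha.le hb.le hab)
      _ ≤ a * Real.exp (Lfun m N x) + b * Real.exp (Lfun m N y) := by
        have := convexOn_exp.2 (mem_univ (Lfun m N x)) (mem_univ (Lfun m N y)) ha.le hb.le hab
        simpa [smul_eq_mul] using this
  simp only [psiF]; linarith

lemma psiF_tendsto : Tendsto (fun x => psiF m N x / x) atTop atTop := by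
  refine tendsto_atTop_mono' atTop ?_ tendsto_id
  filter_upwards [eventually_ge_atTop (1:ℝ)] with x hx
  have h1 : x^2 ≤ psiF m N x := psiF_lower m N x (by linarith)
  have hx0 : (0:ℝ) < x := by linarith
  show x ≤ psiF m N x / x
  rw [le_div_iff₀ hx0]
  nlinarith

lemma psiF_surj (y : ℝ) (hy : 0 ≤ y) : ∃ x, 0 ≤ x ∧ psiF m N x = y := by
  have h0 : psiF m N 0 = 0 := psiF_zero m N
  have hb : y ≤ psiF m N (y+1) := by
    have := psiF_lower m N (y+1) (by linarith); nlinarith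
  have hIcc : y ∈ Icc (psiF m N 0) (psiF m N (y+1)) := by rw [h0]; exact ⟨hy, hb⟩
  obtain ⟨x, hx, hxy⟩ := intermediate_value_Icc (by linarith : (0:ℝ) ≤ y+1)
    ((psiF_cont m N).continuousOn) hIcc
  exact ⟨x, hx.1, hxy⟩

lemma psiF_key (k : ℕ) :
    (m ((psiF m N k) ^ (-(N:ℝ)⁻¹)))⁻¹ < psiF m N ((k:ℝ)+1) := by
  have hL := (Lfun_nat m N k).1
  set y := (m ((psiF m N k) ^ (-(N:ℝ)⁻¹)))⁻¹ with hy
  have hc : cseq m N k = |Real.log (1 + |y|)| := by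
    rw [hy]; unfold cseq auxC psiF; rw [hL]
  have h1 : 1 + |y| ≤ Real.exp (cseq m N k) := by
    calc 1 + |y| = Real.exp (Real.log (1+|y|)) := (Real.exp_log (by positivity)).symm
      _ ≤ Real.exp |Real.log (1+|y|)| := Real.exp_le_exp.2 (le_abs_self _)
      _ = Real.exp (cseq m N k) := by rw [hc]
  have h2 : Real.exp (cseq m N k) ≤ Real.exp (Lfun m N ((k:ℝ)+1)) :=
    Real.exp_le_exp.2 (cseq_le_Lfun m N k)
  have h3 : (1:ℝ) ≤ ((k:ℝ)+1)^2 := by nlinarith [Nat.cast_nonneg (α := ℝ) k]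
  have hyabs : y ≤ |y| := le_abs_self y
  show y < psiF m N ((k:ℝ)+1)
  unfold psiF
  linarith

end OrliczAux

/-- if `m : (0,1) → [0,∞)` is nondecreasing and for every Orlicz function `ψ`
and every `A > 0` one has `m h ≤ 1/ψ(A·ψ⁻¹(1/h^N))` for all small `h`, then `m` vanishes
near `0`. -/
theorem stmt1 (N : ℕ) (hN : 1 ≤ N) (m : ℝ → ℝ)
    (hm0 : ∀ h ∈ Ioo (0:ℝ) 1, 0 ≤ m h) (hmono : MonotoneOn m (Ioo (0:ℝ) 1))
    (hyp : ∀ ψ ψinv : ℝ → ℝ, OrliczFunction ψ → OrliczInverse ψ ψinv → ∀ A > (0:ℝ),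
      ∃ h₀ ∈ Ioo (0:ℝ) 1, ∀ h : ℝ, 0 < h → h < h₀ →
        m h ≤ 1 / ψ (A * ψinv (1 / h ^ N))) :
    ∃ h₁ ∈ Ioo (0:ℝ) 1, ∀ h : ℝ, 0 < h → h ≤ h₁ → m h = 0 := by
  by_contra hcon
  push_neg at hcon
  have hpos : ∀ h ∈ Ioo (0:ℝ) 1, 0 < m h := by
    intro h₁ hmem
    obtain ⟨h, h0, hle, hne⟩ := hcon h₁ hmem
    have hmem' : h ∈ Ioo (0:ℝ) 1 := ⟨h0, lt_of_le_of_lt hle hmem.2⟩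
    have h1 : m h ≤ m h₁ := hmono hmem' hmem hle
    have h2 : 0 ≤ m h := hm0 h hmem'
    exact lt_of_lt_of_le (lt_of_le_of_ne h2 (Ne.symm hne)) h1
  classical
  set ψ : ℝ → ℝ := psiF m N with hψ
  set ψinv : ℝ → ℝ := fun y => if h : ∃ x, 0 ≤ x ∧ ψ x = y then h.choose else 0 with hψinv
  have hinv1 : ∀ y, 0 ≤ y → 0 ≤ ψinv y ∧ ψ (ψinv y) = y := by
    intro y hy
    have hex : ∃ x, 0 ≤ x ∧ ψ x = y := psiF_surj m N y hy
    simp only [hψinv, dif_pos hex]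
    exact ⟨hex.choose_spec.1, hex.choose_spec.2⟩
  have hinv2 : ∀ x, 0 ≤ x → ψinv (ψ x) = x := by
    intro x hx
    have hex : ∃ x', 0 ≤ x' ∧ ψ x' = ψ x := ⟨x, hx, rfl⟩
    simp only [hψinv, dif_pos hex]
    exact (psiF_strictMono m N).injOn (mem_Ici.2 hex.choose_spec.1) (mem_Ici.2 hx)
      hex.choose_spec.2
  have hOF : OrliczFunction ψ :=
    ⟨psiF_strictConvex m N, fun x hx => le_trans (sq_nonneg x) (psiF_lower m N x hx),
      psiF_zero m N, (psiF_cont m N).continuousWithinAt, psiF_tendsto m N⟩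
  have hOI : OrliczInverse ψ ψinv :=
    ⟨hinv2, fun y hy => (hinv1 y hy).2, fun y hy => (hinv1 y hy).1⟩
  obtain ⟨h₀, hh₀, H⟩ := hyp ψ ψinv hOF hOI 2 two_pos
  obtain ⟨n, hn⟩ := exists_nat_gt (h₀ ^ N)⁻¹
  set K : ℕ := n + 2 with hK
  have hK2 : (2:ℝ) ≤ (K:ℝ) := by rw [hK]; push_cast; linarith [Nat.cast_nonneg (α := ℝ) n]
  have hKpos : (0:ℝ) ≤ (K:ℝ) := by linarith
  have hψKgt : (h₀^N)⁻¹ < ψ (K:ℝ) := by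
    have hnK : (n:ℝ) < (K:ℝ) := by rw [hK]; push_cast; linarith
    have hKK : (K:ℝ) ≤ (K:ℝ)^2 := by nlinarith
    have := psiF_lower m N (K:ℝ) hKpos
    rw [hψ]
    linarith
  have hψKpos : 0 < ψ (K:ℝ) := lt_trans (inv_pos.2 (pow_pos hh₀.1 N)) hψKgt
  set hk : ℝ := ψ (K:ℝ) ^ (-(N:ℝ)⁻¹) with hhk
  have hkpos : 0 < hk := Real.rpow_pos_of_pos hψKpos _
  have hNne : (N:ℝ) ≠ 0 := Nat.cast_ne_zero.2 (by omega)
  have hkN : hk ^ N = (ψ (K:ℝ))⁻¹ := by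
    rw [hhk, ← Real.rpow_natCast (ψ (K:ℝ) ^ (-(N:ℝ)⁻¹)) N, ← Real.rpow_mul hψKpos.le]
    rw [show (-(N:ℝ)⁻¹) * (N:ℝ) = -1 by field_simp]
    exact Real.rpow_neg_one _
  have hkinv : (ψ (K:ℝ))⁻¹ < h₀ ^ N := by
    have hp : 0 < h₀ ^ N := pow_pos hh₀.1 N
    have := one_div_lt_one_div_of_lt (inv_pos.2 hp) hψKgt
    rwa [one_div, one_div, inv_inv] at this
  have hklt : hk < h₀ := by
    have h5 : hk ^ N < h₀ ^ N := by rw [hkN]; exact hkinv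
    exact lt_of_pow_lt_pow_left₀ N hh₀.1.le h5
  have hkmem : hk ∈ Ioo (0:ℝ) 1 := ⟨hkpos, hklt.trans hh₀.2⟩
  have hmk : 0 < m hk := hpos hk hkmem
  have Hk := H hk hkpos hklt
  have harg : 1 / hk ^ N = ψ (K:ℝ) := by rw [hkN, one_div, inv_inv]
  rw [harg, hinv2 _ hKpos] at Hk
  have hkey : (m hk)⁻¹ < ψ ((K:ℝ)+1) := by
    have := psiF_key m N K
    rw [← hψ] at this
    exact this
  have hmono2 : ψ ((K:ℝ)+1) ≤ ψ (2 * (K:ℝ)) :=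
    (psiF_strictMono m N).monotoneOn (mem_Ici.2 (by linarith)) (mem_Ici.2 (by linarith))
      (by linarith)
  have hlt2 : (m hk)⁻¹ < ψ (2 * (K:ℝ)) := lt_of_lt_of_le hkey hmono2
  have hfin : 1 / ψ (2 * (K:ℝ)) < m hk := by
    have := one_div_lt_one_div_of_lt (inv_pos.2 hmk) hlt2
    rwa [one_div (m hk)⁻¹, inv_inv] at this
  linarith
end

section
/- Let φ : 𝔹_N → 𝔹_N be holomorphic. Suppose that for every Orlicz function ψ and every A > 0 there exists h₀ ∈ (0,1) such that σ_N({η ∈ 𝕊_N : |1 − ⟨φ(rη), ζ⟩| < h}) ≤ 1/ψ(A·ψ⁻¹(1/h^N)) for all 0 < h < h₀, all 0 < r < 1 and all ζ ∈ 𝕊_N. Then sup_{z ∈ 𝔹_N} |φ(z)| < 1. -/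
open Set Filter

open MeasureTheory Set Filter Metric

/-- The non-isotropic ball `S(ζ,h) = {z ∈ B_N : |1 − ⟨z,ζ⟩| < h}`, where
`⟨z,ζ⟩ = Σ zᵢ conj ζᵢ` is the Hermitian inner product (i.e. `⟪ζ, z⟫` in Mathlib's
convention). -/
def nonisotropicBall (N : ℕ) (ζ : EuclideanSpace ℂ (Fin N)) (h : ℝ) :
    Set (EuclideanSpace ℂ (Fin N)) :=
  {z | ‖z‖ < 1 ∧ ‖1 - (inner ℂ ζ z : ℂ)‖ < h}

/-- The weighted measure `(1−|z|²)^α dv` on the unit ball of `ℂ^N`. -/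
noncomputable def wBergman (N : ℕ) [MeasurableSpace (EuclideanSpace ℂ (Fin N))]
    [BorelSpace (EuclideanSpace ℂ (Fin N))] (α : ℝ) :
    Measure (EuclideanSpace ℂ (Fin N)) :=
  (volume.restrict (Metric.ball 0 1)).withDensity
    fun z => ENNReal.ofReal ((1 - ‖z‖ ^ 2) ^ α)

/-- The normalized weighted measure `v_α = c_α (1−|z|²)^α dv` on the unit ball of `ℂ^N`,
with `c_α` chosen so that `v_α(B_N) = 1`. -/
noncomputable def vBergman (N : ℕ) [MeasurableSpace (EuclideanSpace ℂ (Fin N))]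
    [BorelSpace (EuclideanSpace ℂ (Fin N))] (α : ℝ) :
    Measure (EuclideanSpace ℂ (Fin N)) :=
  (wBergman N α Set.univ)⁻¹ • wBergman N α


set_option maxHeartbeats 1000000
section Aux
noncomputable section StmtAux

def sfun (k : ℕ) : ℝ := 2 ^ (k + 1)

lemma sfun_pos (k : ℕ) : 0 < sfun k := by unfold sfun; positivity

lemma sfun_mono : Monotone sfun := fun a b hab =>
  pow_le_pow_right₀ one_le_two (by omega)

lemma lt_sfun (k : ℕ) : (k : ℝ) < sfun k := by
  have h : (k : ℝ) < 2 ^ k := by exact_mod_cast Nat.lt_two_pow_self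
  calc (k : ℝ) < 2 ^ k := h
    _ ≤ 2 ^ (k + 1) := pow_le_pow_right₀ one_le_two (by omega)

lemma exists_sfun_gt (x : ℝ) : ∃ K : ℕ, x < sfun K := by
  obtain ⟨K, hK⟩ := exists_nat_gt x
  exact ⟨K, hK.trans (lt_sfun K)⟩

variable (c : ℕ → ℝ)

def ffun (x : ℝ) : ℝ := ∑' j : ℕ, c j * max (x - sfun j) 0

def psifun (x : ℝ) : ℝ := x ^ 2 + ffun c x

def psiinvfun : ℝ → ℝ := Function.invFunOn (psifun c) (Ici 0)

variable {c}

lemma term_eq_zero {x : ℝ} {j : ℕ} (h : x ≤ sfun j) : c j * max (x - sfun j) 0 = 0 := by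
  rw [max_eq_right (by linarith), mul_zero]

lemma ffun_eq_sum {K : ℕ} {x : ℝ} (h : x ≤ sfun K) :
    ffun c x = ∑ j ∈ Finset.range K, c j * max (x - sfun j) 0 := by
  refine tsum_eq_sum fun j hj => term_eq_zero (h.trans (sfun_mono ?_))
  exact le_of_not_gt fun hlt => hj (Finset.mem_range.mpr hlt)

lemma ffun_zero : ffun c 0 = 0 := by
  rw [ffun_eq_sum (K := 0) (sfun_pos 0).le, Finset.range_zero, Finset.sum_empty]

variable (hc : ∀ j, 0 ≤ c j)
include hc

lemma term_nonneg (j : ℕ) (x : ℝ) : 0 ≤ c j * max (x - sfun j) 0 :=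
  mul_nonneg (hc j) (le_max_right _ _)

lemma ffun_nonneg (x : ℝ) : 0 ≤ ffun c x := tsum_nonneg (fun j => term_nonneg hc j x)

lemma ffun_mono : Monotone (ffun c) := by
  intro x y hxy
  obtain ⟨K, hK⟩ := exists_sfun_gt y
  rw [ffun_eq_sum hK.le, ffun_eq_sum ((hxy.trans hK.le))]
  refine Finset.sum_le_sum fun j _ => ?_
  exact mul_le_mul_of_nonneg_left (max_le_max (by linarith) le_rfl) (hc j)

lemma ffun_convex_ineq (x y a b : ℝ) (ha : 0 ≤ a) (hb : 0 ≤ b) (hab : a + b = 1) :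
    ffun c (a * x + b * y) ≤ a * ffun c x + b * ffun c y := by
  obtain ⟨K, hK⟩ := exists_sfun_gt (max x y)
  have hx : x ≤ sfun K := (le_max_left x y).trans hK.le
  have hy : y ≤ sfun K := (le_max_right x y).trans hK.le
  have hz : a * x + b * y ≤ sfun K := by
    have hs : a * sfun K + b * sfun K = sfun K := by linear_combination sfun K * hab
    nlinarith [mul_le_mul_of_nonneg_left hx ha, mul_le_mul_of_nonneg_left hy hb]
  rw [ffun_eq_sum hx, ffun_eq_sum hy, ffun_eq_sum hz, Finset.mul_sum, Finset.mul_sum,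
    ← Finset.sum_add_distrib]
  refine Finset.sum_le_sum fun j _ => ?_
  have h1 : a * x + b * y - sfun j = a * (x - sfun j) + b * (y - sfun j) := by
    linear_combination sfun j * hab
  have h2 : max (a * x + b * y - sfun j) 0 ≤ a * max (x - sfun j) 0 + b * max (y - sfun j) 0 := by
    rw [h1]
    refine max_le ?_ (by positivity)
    have h3 : x - sfun j ≤ max (x - sfun j) 0 := le_max_left _ _
    have h4 : y - sfun j ≤ max (y - sfun j) 0 := le_max_left _ _
    nlinarith [mul_le_mul_of_nonneg_left h3 ha, mul_le_mul_of_nonneg_left h4 hb]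
  calc c j * max (a * x + b * y - sfun j) 0
      ≤ c j * (a * max (x - sfun j) 0 + b * max (y - sfun j) 0) :=
        mul_le_mul_of_nonneg_left h2 (hc j)
    _ = a * (c j * max (x - sfun j) 0) + b * (c j * max (y - sfun j) 0) := by ring

omit hc in
lemma ffun_continuous : Continuous (ffun c) := by
  rw [continuous_iff_continuousAt]
  intro x
  obtain ⟨K, hK⟩ := exists_sfun_gt x
  have hcont : ContinuousAt (fun y => ∑ j ∈ Finset.range K, c j * max (y - sfun j) 0) x :=
    (continuous_finset_sum _ fun j _ =>
      continuous_const.mul ((continuous_id.sub continuous_const).max continuous_const)).continuousAt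
  refine hcont.congr ?_
  filter_upwards [eventually_lt_nhds hK] with y hy
  exact (ffun_eq_sum hy.le).symm

omit hc in
lemma psifun_continuous : Continuous (psifun c) :=
  (continuous_pow 2).add (ffun_continuous)

omit hc in
lemma psifun_zero : psifun c 0 = 0 := by
  simp [psifun, ffun_zero]

lemma psifun_nonneg (x : ℝ) : 0 ≤ psifun c x := by
  unfold psifun; nlinarith [ffun_nonneg hc x, sq_nonneg x]

lemma psifun_strictConvex : StrictConvexOn ℝ (Ici 0) (psifun c) := by
  have h1 : StrictConvexOn ℝ (Ici (0:ℝ)) fun x : ℝ => x ^ 2 :=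
    (Even.strictConvexOn_pow even_two two_ne_zero).subset (subset_univ _) (convex_Ici 0)
  refine ⟨convex_Ici 0, fun x hx y hy hxy a b ha hb hab => ?_⟩
  have hsq := h1.2 hx hy hxy ha hb hab
  have hf := ffun_convex_ineq hc x y a b ha.le hb.le hab
  simp only [smul_eq_mul] at hsq ⊢
  unfold psifun
  nlinarith

lemma psifun_strictMonoOn : StrictMonoOn (psifun c) (Ici 0) := by
  intro x hx y hy hxy
  have hx0 : (0:ℝ) ≤ x := hx
  have h1 : x ^ 2 < y ^ 2 := by nlinarith
  have h2 := ffun_mono hc hxy.le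
  unfold psifun; nlinarith

lemma psifun_ge_sq (x : ℝ) : x ^ 2 ≤ psifun c x := by
  have := ffun_nonneg hc x; unfold psifun; linarith

lemma psifun_surj {y : ℝ} (hy : 0 ≤ y) : ∃ x ∈ Ici (0:ℝ), psifun c x = y := by
  set b := max 1 y with hb
  have hb1 : (1:ℝ) ≤ b := le_max_left _ _
  have hby : y ≤ b := le_max_right _ _
  have hψb : y ≤ psifun c b := by
    have := psifun_ge_sq hc b
    nlinarith
  have hmem : y ∈ Icc (psifun c 0) (psifun c b) := by
    rw [psifun_zero]; exact ⟨hy, hψb⟩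
  obtain ⟨x, hx, hxy⟩ := intermediate_value_Icc (by linarith : (0:ℝ) ≤ b)
    ((psifun_continuous).continuousOn (s := Icc 0 b)) hmem
  exact ⟨x, hx.1, hxy⟩

lemma psifun_orlicz : OrliczFunction (psifun c) := by
  refine ⟨psifun_strictConvex hc, fun x _ => psifun_nonneg hc x, psifun_zero,
    (psifun_continuous).continuousWithinAt, ?_⟩
  refine tendsto_atTop_mono' _ ?_ tendsto_id
  filter_upwards [eventually_ge_atTop (1:ℝ)] with x hx
  have hx0 : (0:ℝ) < x := by linarith
  rw [le_div_iff₀ hx0]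
  have := psifun_ge_sq hc x
  simp only [id_eq]
  nlinarith

lemma psifun_orliczInverse : OrliczInverse (psifun c) (psiinvfun c) := by
  refine ⟨?_, ?_, ?_⟩
  · intro x hx
    exact (psifun_strictMonoOn hc).injOn.leftInvOn_invFunOn hx
  · intro y hy
    exact Function.invFunOn_eq (psifun_surj hc hy)
  · intro y hy
    exact Function.invFunOn_mem (psifun_surj hc hy)

lemma psiinv_ge {k : ℕ} {y : ℝ} (h : psifun c (sfun k) ≤ y) : sfun k ≤ psiinvfun c y := by
  have hy : 0 ≤ y := (psifun_nonneg hc _).trans h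
  have h1 : psifun c (psiinvfun c y) = y := Function.invFunOn_eq (psifun_surj hc hy)
  have h2 : psiinvfun c y ∈ Ici (0:ℝ) := Function.invFunOn_mem (psifun_surj hc hy)
  by_contra hlt
  push_neg at hlt
  have h3 := psifun_strictMonoOn hc h2 (mem_Ici.mpr (sfun_pos k).le) hlt
  rw [h1] at h3
  linarith

lemma psifun_le (k : ℕ) : psifun c (sfun k) ≤ sfun k ^ 2 + sfun k * ∑ j ∈ Finset.range k, c j := by
  unfold psifun
  rw [ffun_eq_sum (le_refl (sfun k)), Finset.mul_sum]
  refine add_le_add le_rfl (Finset.sum_le_sum fun j _ => ?_)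
  calc c j * max (sfun k - sfun j) 0 ≤ c j * sfun k := by
        refine mul_le_mul_of_nonneg_left (max_le ?_ (sfun_pos k).le) (hc j)
        have := sfun_pos j; linarith
    _ = sfun k * c j := mul_comm _ _

lemma psifun_lb (k : ℕ) : c k * sfun k ≤ psifun c (2 * sfun k) := by
  have hsum : Summable fun j => c j * max (2 * sfun k - sfun j) 0 := by
    obtain ⟨K, hK⟩ := exists_sfun_gt (2 * sfun k)
    exact summable_of_ne_finset_zero (s := Finset.range K) fun j hj =>
      term_eq_zero (hK.le.trans (sfun_mono (le_of_not_gt fun hlt => hj (Finset.mem_range.mpr hlt))))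
  have h1 : c k * max (2 * sfun k - sfun k) 0 ≤ ffun c (2 * sfun k) :=
    Summable.le_tsum hsum k fun j _ => term_nonneg hc j _
  have h2 : max (2 * sfun k - sfun k) 0 = sfun k := by
    rw [max_eq_left (by have := sfun_pos k; linarith)]; ring
  rw [h2] at h1
  have h3 : (0:ℝ) ≤ (2 * sfun k) ^ 2 := sq_nonneg _
  unfold psifun; linarith

lemma psifun_monoOn {x y : ℝ} (hx : 0 ≤ x) (hxy : x ≤ y) : psifun c x ≤ psifun c y := by
  rcases eq_or_lt_of_le hxy with rfl | h
  · exact le_rfl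
  · exact (psifun_strictMonoOn hc hx (hx.trans hxy) h).le

end StmtAux

noncomputable section MeasAux

variable {N : ℕ}

local notation "E" => EuclideanSpace ℂ (Fin N)

lemma exists_isometry (hN : 1 ≤ N) (x y : E) (hx : ‖x‖ = 1) (hy : ‖y‖ = 1) :
    ∃ U : E ≃ₗᵢ[ℂ] E, U x = y := by
  have i0 : Fin N := ⟨0, hN⟩
  have card : Module.finrank ℂ E = Fintype.card (Fin N) := by
    simp [finrank_euclideanSpace_fin]
  have horth : ∀ v : E, ‖v‖ = 1 →
      Orthonormal ℂ (({i0} : Set (Fin N)).restrict (fun _ : Fin N => v)) := by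
    intro v hv
    constructor
    · intro i; exact hv
    · intro i j hij
      exact absurd (Subsingleton.elim i j) hij
  obtain ⟨bx, hbx⟩ := (horth x hx).exists_orthonormalBasis_extension_of_card_eq card
  obtain ⟨by', hby⟩ := (horth y hy).exists_orthonormalBasis_extension_of_card_eq card
  refine ⟨bx.repr.trans by'.repr.symm, ?_⟩
  have h1 : bx i0 = x := hbx i0 rfl
  have h2 : by' i0 = y := hby i0 rfl
  rw [LinearIsometryEquiv.trans_apply, ← h1, bx.repr_self, by'.repr_symm_single, h2]

lemma cap_pos (hN : 1 ≤ N) [MeasurableSpace E] [BorelSpace E]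
    (σ : Measure E) (hσp : IsProbabilityMeasure σ)
    (hσsph : σ {z : E | ‖z‖ ≠ 1} = 0)
    (hσinv : ∀ U : E ≃ₗᵢ[ℂ] E, Measure.map (⇑U) σ = σ)
    (η₀ : E) (hη₀ : ‖η₀‖ = 1) {δ : ℝ} (hδ : 0 < δ) :
    0 < σ (Metric.sphere 0 1 ∩ Metric.ball η₀ δ) := by
  have hsph_eq : ({z : E | ‖z‖ ≠ 1}) = (Metric.sphere (0:E) 1)ᶜ := by
    ext z; simp [mem_sphere_zero_iff_norm]
  by_contra hcon
  push_neg at hcon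
  have h0 : σ (Metric.sphere 0 1 ∩ Metric.ball η₀ δ) = 0 := le_antisymm hcon (by positivity)
  have hall : ∀ ξ : E, ‖ξ‖ = 1 → σ (Metric.sphere 0 1 ∩ Metric.ball ξ δ) = 0 := by
    intro ξ hξ
    obtain ⟨U, hU⟩ := exists_isometry hN η₀ ξ hη₀ hξ
    have hmeas : MeasurableSet (Metric.sphere (0:E) 1 ∩ Metric.ball ξ δ) :=
      (isClosed_sphere.measurableSet).inter measurableSet_ball
    have hmap : σ (Metric.sphere 0 1 ∩ Metric.ball ξ δ)
        = σ ((⇑U) ⁻¹' (Metric.sphere 0 1 ∩ Metric.ball ξ δ)) := by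
      conv_lhs => rw [← hσinv U]
      exact Measure.map_apply (U.continuous.measurable) hmeas
    have hpre : (⇑U) ⁻¹' (Metric.sphere 0 1 ∩ Metric.ball ξ δ)
        = Metric.sphere 0 1 ∩ Metric.ball η₀ δ := by
      ext z
      simp only [Set.mem_preimage, Set.mem_inter_iff, mem_sphere_zero_iff_norm,
        Metric.mem_ball, dist_eq_norm]
      rw [U.norm_map, ← hU, ← U.map_sub, U.norm_map]
    rw [hmap, hpre, h0]
  obtain ⟨b', hb's, hb'f, hcov⟩ := (isCompact_sphere (0:E) 1).elim_finite_subcover_image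
    (b := Metric.sphere (0:E) 1) (c := fun ξ => Metric.ball ξ δ)
    (fun ξ _ => Metric.isOpen_ball)
    (fun z hz => Set.mem_biUnion hz (Metric.mem_ball_self hδ))
  have hsphere0 : σ (Metric.sphere (0:E) 1) = 0 := by
    have hsub : Metric.sphere (0:E) 1 ⊆ ⋃ ξ ∈ b', Metric.sphere (0:E) 1 ∩ Metric.ball ξ δ := by
      intro z hz
      obtain ⟨ξ, hξ, hzξ⟩ := Set.mem_iUnion₂.mp (hcov hz)
      exact Set.mem_iUnion₂.mpr ⟨ξ, hξ, hz, hzξ⟩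
    refine measure_mono_null hsub ?_
    refine (measure_biUnion_null_iff hb'f.countable).mpr fun ξ hξ => ?_
    exact hall ξ (mem_sphere_zero_iff_norm.mp (hb's hξ))
  have : σ univ ≤ σ (Metric.sphere (0:E) 1) + σ ((Metric.sphere (0:E) 1)ᶜ) := by
    rw [← Set.union_compl_self (Metric.sphere (0:E) 1)]
    exact measure_union_le _ _
  rw [measure_univ, hsphere0, ← hsph_eq, hσsph] at this
  simp at this

end MeasAux

noncomputable section KeyAux
variable {N : ℕ}
local notation "E" => EuclideanSpace ℂ (Fin N)

lemma key_est (φ : E → E) (hφd : DifferentiableOn ℂ φ (Metric.ball 0 1))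
    (hφm : MapsTo φ (Metric.ball 0 1) (Metric.ball 0 1))
    {zn : E} (hr1 : ‖zn‖ < 1) (hzne : zn ≠ 0) (hφzpos : 0 < ‖φ zn‖)
    {η : E} (hη : ‖η‖ = 1)
    (hd : ‖η - ‖zn‖⁻¹ • zn‖ < (1 - ‖φ zn‖) * (1 - ‖zn‖) / 2) :
    ‖1 - (inner ℂ ((‖φ zn‖⁻¹ : ℝ) • φ zn) (φ (‖zn‖ • η)) : ℂ)‖
      < 3 * (1 - ‖φ zn‖) := by
  have hr0 : 0 < ‖zn‖ := norm_pos_iff.mpr hzne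
  have hφz1 : ‖φ zn‖ < 1 := by
    have := hφm (mem_ball_zero_iff.mpr hr1)
    exact mem_ball_zero_iff.mp this
  set r : ℝ := ‖zn‖ with hr_def
  set ε : ℝ := 1 - ‖φ zn‖ with hε_def
  have hε : 0 < ε := by simp only [hε_def]; linarith
  have hε1 : ε ≤ 1 := by simp only [hε_def]; linarith [norm_nonneg (φ zn)]
  set η₀ : E := r⁻¹ • zn with hη₀_def
  set δ : ℝ := ε * (1 - r) / 2 with hδ_def
  set ζ : E := (‖φ zn‖⁻¹ : ℝ) • φ zn with hζ_def
  have hζnorm : ‖ζ‖ = 1 := by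
    rw [hζ_def, norm_smul, Real.norm_eq_abs, abs_of_pos (inv_pos.mpr hφzpos),
      inv_mul_cancel₀ hφzpos.ne']
  have hz_eq : r • η₀ = zn := by
    rw [hη₀_def, smul_smul, mul_inv_cancel₀ hr0.ne', one_smul]
  -- inner product with itself
  have hinner1 : (inner ℂ ζ (φ zn) : ℂ) = ((‖φ zn‖ : ℝ) : ℂ) := by
    rw [hζ_def, RCLike.real_smul_eq_coe_smul (K := ℂ), inner_smul_left,
      inner_self_eq_norm_sq_to_K]
    rw [RCLike.conj_ofReal]
    norm_cast
    field_simp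
    rfl
  -- Lipschitz-type bound via Schwarz
  have hlip : ‖φ (r • η) - φ zn‖ < ε := by
    rcases eq_or_ne η η₀ with heq | hne
    · rw [heq, hz_eq]
      simpa using hε
    · have hd0 : 0 < ‖η - η₀‖ := by
        rw [norm_pos_iff, sub_ne_zero]; exact hne
      set w : E := r • η - zn with hw_def
      have hw_eq : w = r • (η - η₀) := by rw [hw_def, smul_sub, hz_eq]
      have hwnorm : ‖w‖ = r * ‖η - η₀‖ := by
        rw [hw_eq, norm_smul, Real.norm_eq_abs, abs_of_pos hr0]
      have hwpos : 0 < ‖w‖ := by rw [hwnorm]; positivity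
      have hwd : ‖w‖ ≤ ‖η - η₀‖ := by
        rw [hwnorm]
        nlinarith [hd0.le, hr1.le]
      have hδle : δ ≤ (1 - r) / 2 := by
        rw [hδ_def]
        nlinarith
      have hwδ : ‖w‖ < δ := lt_of_le_of_lt hwd hd
      have hwlt : ‖w‖ < 1 - r := by
        have : δ < 1 - r := by rw [hδ_def]; nlinarith
        linarith
      set ρ : ℝ := (1 - r) / ‖w‖ with hρ_def
      have hρ1 : 1 < ρ := (one_lt_div hwpos).mpr hwlt
      set L : ℂ → E := fun lam => zn + lam • w with hL_def
      have hLmaps : MapsTo L (Metric.ball 0 ρ) (Metric.ball (0:E) 1) := by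
        intro lam hlam
        rw [mem_ball_zero_iff] at hlam ⊢
        have h1 : ‖zn + lam • w‖ ≤ ‖zn‖ + ‖lam‖ * ‖w‖ := by
          refine (norm_add_le _ _).trans ?_
          rw [norm_smul]
        have h2 : ‖lam‖ * ‖w‖ < ρ * ‖w‖ := by
          exact mul_lt_mul_of_pos_right hlam hwpos
        have h3 : ρ * ‖w‖ = 1 - r := by
          rw [hρ_def, div_mul_cancel₀ _ hwpos.ne']
        simp only [hL_def]
        calc ‖zn + lam • w‖ ≤ ‖zn‖ + ‖lam‖ * ‖w‖ := h1
          _ < r + ρ * ‖w‖ := by rw [hr_def] at *; linarith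
          _ = 1 := by rw [h3]; ring
      have hgd : DifferentiableOn ℂ (φ ∘ L) (Metric.ball 0 ρ) := by
        refine DifferentiableOn.comp hφd ?_ hLmaps
        exact ((differentiable_id.smul_const w).const_add zn).differentiableOn
      have hg0 : (φ ∘ L) 0 = φ zn := by simp [hL_def]
      have hgm : MapsTo (φ ∘ L) (Metric.ball 0 ρ) (Metric.ball ((φ ∘ L) 0) 2) := by
        intro lam hlam
        have h1 : φ (L lam) ∈ Metric.ball (0:E) 1 := hφm (hLmaps hlam)
        rw [mem_ball_zero_iff] at h1
        rw [Metric.mem_ball, hg0, dist_eq_norm]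
        calc ‖φ (L lam) - φ zn‖ ≤ ‖φ (L lam)‖ + ‖φ zn‖ := norm_sub_le _ _
          _ < 1 + 1 := add_lt_add h1 hφz1
          _ = 2 := by norm_num
      have h1mem : (1:ℂ) ∈ Metric.ball (0:ℂ) ρ := by
        rw [mem_ball_zero_iff]; simpa using hρ1
      have hsch := Complex.dist_le_div_mul_dist_of_mapsTo_ball hgd (hgm.mono_right Metric.ball_subset_closedBall) h1mem
      have hL1 : L 1 = r • η := by
        simp only [hL_def, one_smul, hw_def]
        abel
      rw [hg0] at hsch
      simp only [Function.comp_apply, hL1] at hsch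
      have hdist10 : dist (1:ℂ) 0 = 1 := by simp
      rw [hdist10, mul_one] at hsch
      have hfrac : 2 / ρ < ε := by
        rw [hρ_def, div_div_eq_mul_div]
        rw [div_lt_iff₀ (by linarith : (0:ℝ) < 1 - r)]
        have : ‖w‖ < ε * (1 - r) / 2 := by rw [← hδ_def]; exact hwδ
        nlinarith
      calc ‖φ (r • η) - φ zn‖ = dist (φ (r • η)) (φ zn) := (dist_eq_norm _ _).symm
        _ ≤ 2 / ρ := hsch
        _ < ε := hfrac
  -- assemble
  have hsplit : (1 - (inner ℂ ζ (φ (r • η)) : ℂ))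
      = (1 - (inner ℂ ζ (φ zn) : ℂ)) + (inner ℂ ζ (φ zn - φ (r • η)) : ℂ) := by
    rw [inner_sub_right]; ring
  rw [hsplit]
  have h1 : ‖1 - (inner ℂ ζ (φ zn) : ℂ)‖ = ε := by
    rw [hinner1]
    have : (1 : ℂ) - ((‖φ zn‖ : ℝ) : ℂ) = ((ε : ℝ) : ℂ) := by
      rw [hε_def]; push_cast; ring
    rw [this, Complex.norm_real, Real.norm_eq_abs, abs_of_pos hε]
  have h2 : ‖(inner ℂ ζ (φ zn - φ (r • η)) : ℂ)‖ < ε := by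
    calc ‖(inner ℂ ζ (φ zn - φ (r • η)) : ℂ)‖ ≤ ‖ζ‖ * ‖φ zn - φ (r • η)‖ := norm_inner_le_norm _ _
      _ = ‖φ (r • η) - φ zn‖ := by rw [hζnorm, one_mul, norm_sub_rev]
      _ < ε := hlip
  calc ‖(1 - (inner ℂ ζ (φ zn) : ℂ)) + (inner ℂ ζ (φ zn - φ (r • η)) : ℂ)‖
      ≤ ‖1 - (inner ℂ ζ (φ zn) : ℂ)‖
        + ‖(inner ℂ ζ (φ zn - φ (r • η)) : ℂ)‖ := norm_add_le _ _
    _ < ε + ε := by rw [h1]; linarith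
    _ ≤ 3 * ε := by linarith

end KeyAux

end Aux

/-- if `φ : B_N → B_N` is holomorphic and for every Orlicz function `ψ` and
`A > 0` one has `σ_N({η ∈ S_N : |1 − ⟨φ(rη),ζ⟩| < h}) ≤ 1/ψ(A·ψ⁻¹(1/h^N))` for all small
`h`, uniformly in `0 < r < 1` and `ζ ∈ S_N`, then `sup_{B_N} |φ| < 1`.  Here `σ` is the
normalized rotation-invariant measure on the unit sphere, encoded as a unitarily invariant
probability measure carried by the sphere. -/
theorem stmt2 (N : ℕ) (hN : 1 ≤ N)
    [MeasurableSpace (EuclideanSpace ℂ (Fin N))] [BorelSpace (EuclideanSpace ℂ (Fin N))]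
    (φ : EuclideanSpace ℂ (Fin N) → EuclideanSpace ℂ (Fin N))
    (hφd : DifferentiableOn ℂ φ (Metric.ball 0 1))
    (hφm : MapsTo φ (Metric.ball 0 1) (Metric.ball 0 1))
    (σ : Measure (EuclideanSpace ℂ (Fin N))) (hσp : IsProbabilityMeasure σ)
    (hσsph : σ {z : EuclideanSpace ℂ (Fin N) | ‖z‖ ≠ 1} = 0)
    (hσinv : ∀ U : EuclideanSpace ℂ (Fin N) ≃ₗᵢ[ℂ] EuclideanSpace ℂ (Fin N),
      Measure.map (⇑U) σ = σ)
    (hyp : ∀ ψ ψinv : ℝ → ℝ, OrliczFunction ψ → OrliczInverse ψ ψinv → ∀ A > (0:ℝ),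
      ∃ h₀ ∈ Ioo (0:ℝ) 1, ∀ h : ℝ, 0 < h → h < h₀ →
        ∀ r ∈ Ioo (0:ℝ) 1, ∀ ζ : EuclideanSpace ℂ (Fin N), ‖ζ‖ = 1 →
          (σ {η : EuclideanSpace ℂ (Fin N) |
              ‖η‖ = 1 ∧ ‖1 - (inner ℂ ζ (φ (r • η)) : ℂ)‖ < h}).toReal ≤
            1 / ψ (A * ψinv (1 / h ^ N))) :
    ∃ r₀ < (1:ℝ), ∀ z ∈ Metric.ball (0 : EuclideanSpace ℂ (Fin N)) 1, ‖φ z‖ ≤ r₀ := by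

  classical
  by_contra hcon
  push_neg at hcon
  have h0mem : (0 : EuclideanSpace ℂ (Fin N)) ∈ Metric.ball (0 : EuclideanSpace ℂ (Fin N)) 1 :=
    Metric.mem_ball_self one_pos
  have hφ0 : ‖φ 0‖ < 1 := mem_ball_zero_iff.mp (hφm h0mem)
  have hex : ∀ n : ℕ, ∃ zz : EuclideanSpace ℂ (Fin N), zz ∈ Metric.ball (0:EuclideanSpace ℂ (Fin N)) 1
      ∧ max (1 - 1/((n:ℝ)+1)) ‖φ 0‖ < ‖φ zz‖ := by
    intro n
    have h1 : 1 - 1/((n:ℝ)+1) < 1 := by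
      have : (0:ℝ) < 1/((n:ℝ)+1) := by positivity
      linarith
    obtain ⟨zz, hz1, hz2⟩ := hcon _ (max_lt h1 hφ0)
    exact ⟨zz, hz1, hz2⟩
  choose z hzmem hzgt using hex
  have hz1 : ∀ n, ‖z n‖ < 1 := fun n => mem_ball_zero_iff.mp (hzmem n)
  have hφz1 : ∀ n, ‖φ (z n)‖ < 1 := fun n => mem_ball_zero_iff.mp (hφm (hzmem n))
  have hfrac_le : ∀ n : ℕ, 1/((n:ℝ)+1) ≤ 1 := by
    intro n
    rw [div_le_one (by positivity)]
    simp
  have hφzpos : ∀ n, 0 < ‖φ (z n)‖ := by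
    intro n
    refine lt_of_le_of_lt ?_ (hzgt n)
    refine le_max_of_le_left ?_
    linarith [hfrac_le n]
  have hzne : ∀ n, z n ≠ 0 := by
    intro n hzz
    have h1 := hzgt n
    rw [hzz] at h1
    exact absurd h1 (not_lt.mpr (le_max_right _ _))
  set ε : ℕ → ℝ := fun n => 1 - ‖φ (z n)‖ with hε_def
  have hεpos : ∀ n, 0 < ε n := fun n => by simp only [hε_def]; linarith [hφz1 n]
  have hεlt : ∀ n, ε n < 1/((n:ℝ)+1) := by
    intro n
    have h1 : 1 - 1/((n:ℝ)+1) < ‖φ (z n)‖ := lt_of_le_of_lt (le_max_left _ _) (hzgt n)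
    simp only [hε_def]
    linarith
  set η₀ : ℕ → EuclideanSpace ℂ (Fin N) := fun n => (‖z n‖⁻¹ : ℝ) • z n with hη₀_def
  have hη₀norm : ∀ n, ‖η₀ n‖ = 1 := by
    intro n
    have hpos : 0 < ‖z n‖ := norm_pos_iff.mpr (hzne n)
    rw [hη₀_def]
    simp only
    rw [norm_smul, Real.norm_eq_abs, abs_of_pos (inv_pos.mpr hpos), inv_mul_cancel₀ hpos.ne']
  set ζ : ℕ → EuclideanSpace ℂ (Fin N) := fun n => (‖φ (z n)‖⁻¹ : ℝ) • φ (z n) with hζ_def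
  have hζnorm : ∀ n, ‖ζ n‖ = 1 := by
    intro n
    rw [hζ_def]
    simp only
    rw [norm_smul, Real.norm_eq_abs, abs_of_pos (inv_pos.mpr (hφzpos n)),
      inv_mul_cancel₀ (hφzpos n).ne']
  set δ : ℕ → ℝ := fun n => ε n * (1 - ‖z n‖)/2 with hδ_def
  have hδpos : ∀ n, 0 < δ n := by
    intro n
    have := hεpos n
    have := hz1 n
    simp only [hδ_def]
    have h1 : 0 < 1 - ‖z n‖ := by linarith
    positivity
  set cap : ℕ → Set (EuclideanSpace ℂ (Fin N)) :=
    fun n => Metric.sphere 0 1 ∩ Metric.ball (η₀ n) (δ n) with hcap_def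
  have hcappos : ∀ n, 0 < σ (cap n) := fun n =>
    cap_pos hN σ hσp hσsph hσinv (η₀ n) (hη₀norm n) (hδpos n)
  set M : ℕ → ℝ := fun n => (σ (cap n)).toReal with hM_def
  have hMpos : ∀ n, 0 < M n := fun n =>
    ENNReal.toReal_pos (hcappos n).ne' (MeasureTheory.measure_ne_top σ _)
  set T : ℕ → ℝ := fun n => 1 / M n + 1 with hT_def
  have hTpos : ∀ n, 0 < T n := by
    intro n
    have := hMpos n
    simp only [hT_def]
    positivity
  -- recursive choice of indices
  have hpick_ex : ∀ (k : ℕ) (S : ℝ), ∃ m : ℕ, k ≤ m ∧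
      (3 * ε m)^N ≤ 1 / max (sfun k^2 + sfun k * S) 1 := by
    intro k S
    set R : ℝ := max (sfun k^2 + sfun k * S) 1 with hR_def
    have hR1 : (1:ℝ) ≤ R := le_max_right _ _
    have hRpos : (0:ℝ) < R := lt_of_lt_of_le one_pos hR1
    obtain ⟨m, hm⟩ := exists_nat_gt (max (k:ℝ) (3 * R))
    have hkm : (k:ℝ) ≤ m := le_of_lt (lt_of_le_of_lt (le_max_left _ _) hm)
    have h3Rm : 3 * R < (m:ℝ) + 1 := by
      have := lt_of_le_of_lt (le_max_right (k:ℝ) (3*R)) hm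
      linarith
    refine ⟨m, by exact_mod_cast hkm, ?_⟩
    have hεm : 3 * ε m < 1 / R := by
      have h1 : 3 * ε m < 3 * (1/((m:ℝ)+1)) := by
        have := hεlt m
        linarith
      have h2 : 3 * (1/((m:ℝ)+1)) < 1 / R := by
        rw [mul_one_div, div_lt_div_iff₀ (by positivity) hRpos]
        nlinarith
      linarith
    have hεm1 : 3 * ε m ≤ 1 := by
      have h1R : 1 / R ≤ 1 := by
        rw [div_le_one hRpos]; exact hR1
      exact hεm.le.trans h1R
    have h0 : 0 ≤ 3 * ε m := by linarith [hεpos m]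
    calc (3 * ε m)^N ≤ (3 * ε m)^1 := pow_le_pow_of_le_one h0 hεm1 hN
      _ = 3 * ε m := pow_one _
      _ ≤ 1 / R := hεm.le
  choose pick hpick1 hpick2 using hpick_ex
  set S : ℕ → ℝ := fun k => Nat.rec (0:ℝ) (fun k ih => ih + T (pick k ih) / sfun k) k with hS_def
  set nseq : ℕ → ℕ := fun k => pick k (S k) with hnseq_def
  set cs : ℕ → ℝ := fun k => T (nseq k) / sfun k with hcs_def
  have hSsucc : ∀ k, S (k+1) = S k + cs k := fun k => rfl
  have hcs0 : ∀ k, 0 ≤ cs k := fun k =>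
    div_nonneg (hTpos _).le (sfun_pos k).le
  have hSsum : ∀ k, S k = ∑ j ∈ Finset.range k, cs j := by
    intro k
    induction k with
    | zero => simp [hS_def]
    | succ k ih => rw [hSsucc, Finset.sum_range_succ, ih]
  -- apply the hypothesis with the tailored Orlicz function
  obtain ⟨h₀, hh₀mem, hbound⟩ := hyp (psifun cs) (psiinvfun cs) (psifun_orlicz hcs0)
    (psifun_orliczInverse hcs0) 2 two_pos
  have hh₀pos : 0 < h₀ := hh₀mem.1
  obtain ⟨k, hk⟩ := exists_nat_gt (3 / h₀)
  set n : ℕ := nseq k with hn_def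
  have hnk : k ≤ n := hpick1 k (S k)
  set h : ℝ := 3 * ε n with hh_def
  have hhpos : 0 < h := by simp only [hh_def]; linarith [hεpos n]
  have hhlt : h < h₀ := by
    have h1 : ε n < 1/((n:ℝ)+1) := hεlt n
    have h2 : ((k:ℝ)+1) ≤ ((n:ℝ)+1) := by
      have : (k:ℝ) ≤ n := by exact_mod_cast hnk
      linarith
    have h3 : 1/((n:ℝ)+1) ≤ 1/((k:ℝ)+1) := by
      apply one_div_le_one_div_of_le (by positivity) h2
    have h4 : 3 / ((k:ℝ)+1) < h₀ := by
      rw [div_lt_iff₀ (by positivity)]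
      rw [div_lt_iff₀ hh₀pos] at hk
      nlinarith
    simp only [hh_def]
    calc 3 * ε n < 3 * (1/((n:ℝ)+1)) := by linarith
      _ ≤ 3 * (1/((k:ℝ)+1)) := by linarith
      _ = 3 / ((k:ℝ)+1) := by ring
      _ < h₀ := h4
  have hrmem : ‖z n‖ ∈ Set.Ioo (0:ℝ) 1 := ⟨norm_pos_iff.mpr (hzne n), hz1 n⟩
  have hmain := hbound h hhpos hhlt ‖z n‖ hrmem (ζ n) (hζnorm n)
  -- lower bound: the cap is contained in the level set
  have hsub : cap n ⊆ {η : EuclideanSpace ℂ (Fin N) |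
      ‖η‖ = 1 ∧ ‖1 - (inner ℂ (ζ n) (φ (‖z n‖ • η)) : ℂ)‖ < h} := by
    rintro η ⟨hs, hb⟩
    have hηnorm : ‖η‖ = 1 := mem_sphere_zero_iff_norm.mp hs
    refine ⟨hηnorm, ?_⟩
    have hdist : ‖η - (‖z n‖⁻¹ : ℝ) • z n‖ < (1 - ‖φ (z n)‖) * (1 - ‖z n‖) / 2 := by
      have := Metric.mem_ball.mp hb
      rw [dist_eq_norm] at this
      simpa only [hη₀_def, hδ_def, hε_def] using this
    have := key_est φ hφd hφm (hz1 n) (hzne n) (hφzpos n) hηnorm hdist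
    simp only [hζ_def, hh_def, hε_def]
    exact this
  have hlow : M n ≤ (σ {η : EuclideanSpace ℂ (Fin N) |
      ‖η‖ = 1 ∧ ‖1 - (inner ℂ (ζ n) (φ (‖z n‖ • η)) : ℂ)‖ < h}).toReal :=
    ENNReal.toReal_mono (MeasureTheory.measure_ne_top σ _) (measure_mono hsub)
  -- upper bound chain via the Orlicz function
  have hRk : (0:ℝ) < max (sfun k^2 + sfun k * S k) 1 :=
    lt_of_lt_of_le one_pos (le_max_right _ _)
  have hyQ : max (sfun k^2 + sfun k * S k) 1 ≤ 1 / h^N := by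
    have hp := hpick2 k (S k)
    have hpow : (0:ℝ) < h^N := by positivity
    rw [le_div_iff₀ hpow]
    rw [le_div_iff₀ hRk] at hp
    calc max (sfun k^2 + sfun k * S k) 1 * h^N = h^N * max (sfun k^2 + sfun k * S k) 1 := by ring
      _ = (3 * ε n)^N * max (sfun k^2 + sfun k * S k) 1 := by rw [hh_def]
      _ ≤ 1 := hp
  have hQle : psifun cs (sfun k) ≤ max (sfun k^2 + sfun k * S k) 1 := by
    refine le_trans (psifun_le hcs0 k) ?_
    refine le_trans ?_ (le_max_left _ _)
    rw [hSsum k]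
  have hsk : sfun k ≤ psiinvfun cs (1/h^N) := psiinv_ge hcs0 (hQle.trans hyQ)
  have hTle : T n ≤ psifun cs (2 * psiinvfun cs (1/h^N)) := by
    have h1 : T n = cs k * sfun k := by
      rw [hcs_def]
      simp only
      rw [div_mul_cancel₀ _ (sfun_pos k).ne']
    calc T n = cs k * sfun k := h1
      _ ≤ psifun cs (2 * sfun k) := psifun_lb hcs0 k
      _ ≤ psifun cs (2 * psiinvfun cs (1/h^N)) := by
          refine psifun_monoOn hcs0 (by linarith [sfun_pos k]) (by linarith)
  have hfinal : 1 / psifun cs (2 * psiinvfun cs (1/h^N)) ≤ 1 / T n :=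
    one_div_le_one_div_of_le (hTpos n) hTle
  have h1 : M n ≤ 1 / T n := hlow.trans (hmain.trans hfinal)
  have h2 : 1 / T n < M n := by
    rw [div_lt_iff₀ (hTpos n)]
    have hMn := hMpos n
    rw [hT_def]
    simp only
    field_simp
    nlinarith
  linarith
end

section
/- Let ψ be an Orlicz function. The following two conditions are equivalent: (i) for every B > 1 there exist C_B ≥ 1 and x₀ > 0 such that ψ(Bx)/ψ(x) ≤ ψ(C_B·B·y)/ψ(y) whenever x₀ ≤ x ≤ y; (ii) for every B > 1 and every n > 0 there exist C_n > 0 and x₀ > 0 such that (ψ(Bx)/ψ(x))^n ≤ ψ(C_n·y)/ψ(B·y) whenever x₀ ≤ x ≤ y. -/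
open Set Filter

lemma orlicz_pos {ψ : ℝ → ℝ} (hψ : OrliczFunction ψ) {x : ℝ} (hx : 0 < x) : 0 < ψ x := by
  obtain ⟨hsc, hnn, h0, -, -⟩ := hψ
  have h := hsc.2 (self_mem_Ici (a := (0:ℝ))) (le_of_lt hx : x ∈ Ici (0:ℝ)) hx.ne
    (by norm_num : (0:ℝ) < 1/2) (by norm_num : (0:ℝ) < 1/2) (by norm_num)
  simp only [h0, smul_eq_mul, mul_zero, zero_add] at h
  have hh := hnn (1/2 * x) (mem_Ici.mpr (by positivity))
  nlinarith

lemma orlicz_mono {ψ : ℝ → ℝ} (hψ : OrliczFunction ψ) {a b : ℝ} (ha : 0 ≤ a) (hab : a ≤ b) :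
    ψ a ≤ ψ b := by
  obtain ⟨hsc, hnn, h0, -, -⟩ := hψ
  rcases eq_or_lt_of_le hab with rfl | hab
  · exact le_refl _
  rcases eq_or_lt_of_le ha with rfl | ha
  · rw [h0]; exact hnn b (le_of_lt hab)
  have hb : 0 < b := lt_trans ha hab
  have hconv := hsc.convexOn
  have key := hconv.2 (self_mem_Ici (a := (0:ℝ))) (hb.le : b ∈ Ici (0:ℝ))
    (show (0:ℝ) ≤ 1 - a/b by rw [sub_nonneg]; exact div_le_one_of_le₀ hab.le hb.le)
    (show (0:ℝ) ≤ a/b by positivity) (by ring)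
  simp only [smul_eq_mul, mul_zero, zero_add, h0] at key
  rw [div_mul_cancel₀ _ hb.ne'] at key
  have h2 : a / b * ψ b ≤ ψ b := by
    have := hnn b hb.le
    nlinarith [div_le_one_of_le₀ hab.le hb.le]
  linarith

/-- equivalence of the two forms of the nabla_0-condition. -/
theorem stmt5 (ψ : ℝ → ℝ) (hψ : OrliczFunction ψ) :
    (∀ B > (1:ℝ), ∃ C ≥ (1:ℝ), ∃ x₀ > (0:ℝ), ∀ x y : ℝ, x₀ ≤ x → x ≤ y →
        ψ (B * x) / ψ x ≤ ψ (C * B * y) / ψ y) ↔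
    (∀ B > (1:ℝ), ∀ n > (0:ℝ), ∃ C > (0:ℝ), ∃ x₀ > (0:ℝ), ∀ x y : ℝ, x₀ ≤ x → x ≤ y →
        (ψ (B * x) / ψ x) ^ n ≤ ψ (C * y) / ψ (B * y)) := by
  constructor
  · intro hi B hB n hn
    obtain ⟨C, hC, x₀, hx₀, H⟩ := hi B hB
    have hB0 : (0:ℝ) < B := lt_trans one_pos hB
    have hC0 : (0:ℝ) < C := lt_of_lt_of_le one_pos hC
    -- key iteration
    have key : ∀ k : ℕ, ∀ x y : ℝ, x₀ ≤ x → x ≤ y →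
        (ψ (B*x)/ψ x)^(k+1) ≤ ψ (C^(k+1) * B^(k+1) * y) / ψ y := by
      intro k
      induction k with
      | zero =>
        intro x y hx hxy
        simpa using H x y hx hxy
      | succ k ih =>
        intro x y hx hxy
        have hy : (0:ℝ) < y := lt_of_lt_of_le hx₀ (le_trans hx hxy)
        have hx' : (0:ℝ) < x := lt_of_lt_of_le hx₀ hx
        have hone : (1:ℝ) ≤ C^(k+1) * B^(k+1) := by
          have h1 : (1:ℝ) ≤ C^(k+1) := one_le_pow₀ hC
          have h2 : (1:ℝ) ≤ B^(k+1) := one_le_pow₀ hB.le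
          nlinarith
        have hyz : y ≤ C^(k+1) * B^(k+1) * y := le_mul_of_one_le_left hy.le hone
        have h1 := ih x y hx hxy
        have h2 := H x (C^(k+1) * B^(k+1) * y) hx (le_trans hxy hyz)
        have hz0 : (0:ℝ) < ψ (C^(k+1) * B^(k+1) * y) :=
          orlicz_pos hψ (lt_of_lt_of_le hy hyz)
        have hy0 : (0:ℝ) < ψ y := orlicz_pos hψ hy
        have hRnn : (0:ℝ) ≤ ψ (B*x)/ψ x :=
          div_nonneg (hψ.2.1 _ (mem_Ici.mpr (by positivity))) (hψ.2.1 _ (mem_Ici.mpr hx'.le))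
        calc (ψ (B*x)/ψ x)^(k+1+1) = (ψ (B*x)/ψ x)^(k+1) * (ψ (B*x)/ψ x) := pow_succ _ _
          _ ≤ (ψ (C^(k+1) * B^(k+1) * y) / ψ y) *
              (ψ (C * B * (C^(k+1) * B^(k+1) * y)) / ψ (C^(k+1) * B^(k+1) * y)) := by
            apply mul_le_mul h1 h2 hRnn
            positivity
          _ = ψ (C * B * (C^(k+1) * B^(k+1) * y)) / ψ y := by
            field_simp
          _ = ψ (C^(k+1+1) * B^(k+1+1) * y) / ψ y := by
            congr 1
            ring_nf
    set m : ℕ := ⌈n⌉₊ with hmdef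
    have hm1 : 1 ≤ m := Nat.one_le_ceil_iff.mpr hn
    have hmn : n ≤ (m:ℝ) := Nat.le_ceil n
    have hB₂ : (1:ℝ) < C^m * B^m := by
      have h2 : (1:ℝ) < B^m := one_lt_pow₀ hB (by omega)
      have h1 : (1:ℝ) ≤ C^m := one_le_pow₀ hC
      nlinarith
    obtain ⟨C₂, hC₂, x₂, hx₂, H₂⟩ := hi (C^m * B^m) hB₂
    refine ⟨C₂ * (C^m * B^m) * B, by positivity, max x₀ x₂,
      lt_of_lt_of_le hx₀ (le_max_left _ _), ?_⟩
    intro x y hx hxy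
    have hx1 : x₀ ≤ x := le_trans (le_max_left _ _) hx
    have hx2 : x₂ ≤ x := le_trans (le_max_right _ _) hx
    have hx' : (0:ℝ) < x := lt_of_lt_of_le hx₀ hx1
    have hy : (0:ℝ) < y := lt_of_lt_of_le hx' hxy
    have hR1 : (1:ℝ) ≤ ψ (B*x)/ψ x :=
      (one_le_div (orlicz_pos hψ hx')).mpr
        (orlicz_mono hψ hx'.le (le_mul_of_one_le_left hx'.le hB.le))
    have step1 : (ψ (B*x)/ψ x)^n ≤ (ψ (B*x)/ψ x)^(m:ℕ) := by
      rw [← Real.rpow_natCast (ψ (B*x)/ψ x) m]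
      exact Real.rpow_le_rpow_of_exponent_le hR1 hmn
    have hmm : m - 1 + 1 = m := Nat.succ_pred_eq_of_pos hm1
    have step2 := key (m-1) x y hx1 hxy
    rw [hmm] at step2
    have step3 := H₂ y (B*y) (le_trans hx2 hxy) (le_mul_of_one_le_left hy.le hB.le)
    have harg : C₂ * (C^m * B^m) * (B*y) = C₂ * (C^m * B^m) * B * y := by ring
    rw [harg] at step3
    exact le_trans step1 (le_trans step2 step3)
  · intro hii B hB
    obtain ⟨C, hC0, x₀, hx₀, H⟩ := hii B hB 1 one_pos
    have hB0 : (0:ℝ) < B := lt_trans one_pos hB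
    refine ⟨max 1 (C/B), le_max_left _ _, x₀, hx₀, ?_⟩
    intro x y hx hxy
    have hx' : (0:ℝ) < x := lt_of_lt_of_le hx₀ hx
    have hy : (0:ℝ) < y := lt_of_lt_of_le hx' hxy
    have h1 := H x y hx hxy
    rw [Real.rpow_one] at h1
    refine le_trans h1 ?_
    have hnum : C * y ≤ max 1 (C/B) * B * y := by
      have h3 : C / B ≤ max 1 (C/B) := le_max_right _ _
      have h5 : (C/B) * (B*y) ≤ max 1 (C/B) * (B*y) :=
        mul_le_mul_of_nonneg_right h3 (by positivity)
      have h4 : C * y = (C/B) * (B*y) := by field_simp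
      nlinarith
    apply div_le_div₀ (hψ.2.1 _ (mem_Ici.mpr (by positivity)))
      (orlicz_mono hψ (by positivity) hnum) (orlicz_pos hψ hy)
      (orlicz_mono hψ hy.le (le_mul_of_one_le_left hy.le hB.le))
end

section
/- If an Orlicz function ψ satisfies the Δ²-condition, then ψ satisfies the uniform ∇₀-condition. -/
open Set Filter

/-- Monotonicity of an Orlicz function on `[0, ∞)`. -/
lemma orlicz_mono_s7 (ψ : ℝ → ℝ) (hψ : OrliczFunction ψ) {s t : ℝ} (hs : 0 ≤ s) (hst : s ≤ t) :
    ψ s ≤ ψ t := by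
  obtain ⟨hconv, hnn, h0, -, -⟩ := hψ
  have ht : 0 ≤ t := hs.trans hst
  rcases eq_or_lt_of_le ht with hteq | htpos
  · have : s = 0 := le_antisymm (hst.trans hteq.symm.le) hs
    rw [this, ← hteq]
  · have htne : t ≠ 0 := ne_of_gt htpos
    have hconv' := hconv.convexOn
    have ha : (0:ℝ) ≤ 1 - s / t := by
      have : s / t ≤ 1 := div_le_one_of_le₀ hst ht
      linarith
    have hb : (0:ℝ) ≤ s / t := div_nonneg hs ht
    have hab : (1 - s / t) + s / t = 1 := by ring
    have key := hconv'.2 (mem_Ici.2 (le_refl (0:ℝ))) (mem_Ici.2 ht) ha hb hab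
    have hst' : (1 - s / t) • (0:ℝ) + (s / t) • t = s := by
      simp only [smul_eq_mul]
      field_simp
      ring
    rw [hst', h0] at key
    have : (1 - s / t) * 0 + (s / t) * ψ t ≤ ψ t := by
      have h1 : s / t ≤ 1 := div_le_one_of_le₀ hst ht
      have h2 : 0 ≤ ψ t := hnn t (mem_Ici.2 ht)
      nlinarith
    calc ψ s ≤ (1 - s / t) * 0 + (s / t) * ψ t := by simpa using key
      _ ≤ ψ t := this

/-- the Delta^2-condition implies the uniform nabla_0-condition. -/
theorem stmt7 (ψ : ℝ → ℝ) (hψ : OrliczFunction ψ) (h : DeltaSquare ψ) : UniformNabla0 ψ := by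
  obtain ⟨C, hC, xd, hxd, hΔ⟩ := h
  -- find N such that ψ x ≥ 1 for x ≥ N
  have htend := hψ.2.2.2.2
  obtain ⟨N, hN⟩ := (htend.eventually_ge_atTop 1).and (eventually_ge_atTop (1:ℝ)) |>.exists_forall_of_atTop
  have hpsi1 : ∀ x : ℝ, N ≤ x → 1 ≤ ψ x := by
    intro x hx
    obtain ⟨h1, h2⟩ := hN x hx
    have hxpos : (0:ℝ) < x := lt_of_lt_of_le one_pos h2
    calc (1:ℝ) ≤ ψ x / x := h1
      _ ≤ ψ x / 1 := by
          apply div_le_div_of_nonneg_left _ one_pos h2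
          exact hψ.2.1 x (mem_Ici.2 hxpos.le)
      _ = ψ x := div_one _
  refine ⟨max C 1, le_max_right _ _, fun B hB => ⟨max xd (max N 1), ?_, fun x y hx hxy => ?_⟩⟩
  · exact lt_of_lt_of_le one_pos (le_max_of_le_right (le_max_right _ _))
  set x₀ := max xd (max N 1) with hx₀
  have hx0pos : (0:ℝ) < x₀ := lt_of_lt_of_le one_pos (le_max_of_le_right (le_max_right _ _))
  have hxpos : 0 < x := lt_of_lt_of_le hx0pos hx
  have hypos : 0 < y := lt_of_lt_of_le hxpos hxy
  have hBpos : (0:ℝ) < B := lt_trans one_pos hB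
  have hψx1 : 1 ≤ ψ x := hpsi1 x (le_trans (le_max_of_le_right (le_max_left _ _)) hx)
  have hψy1 : 1 ≤ ψ y := hpsi1 y (le_trans (le_trans (le_max_of_le_right (le_max_left _ _)) hx) hxy)
  have hψBy1 : 1 ≤ ψ (B * y) :=
    le_trans hψy1 (orlicz_mono_s7 ψ hψ hypos.le (le_mul_of_one_le_left hypos.le hB.le))
  have hypos' : 0 < ψ y := lt_of_lt_of_le one_pos hψy1
  -- chain of inequalities
  have step1 : ψ (B * x) / ψ x ≤ ψ (B * x) :=
    div_le_self (hψ.2.1 _ (mem_Ici.2 (by positivity))) hψx1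
  have step2 : ψ (B * x) ≤ ψ (B * y) :=
    orlicz_mono_s7 ψ hψ (by positivity) (by nlinarith)
  have step3 : ψ (B * y) ≤ (ψ (B * y)) ^ 2 / ψ y := by
    rw [le_div_iff₀ hypos']
    nlinarith [orlicz_mono_s7 ψ hψ hypos.le (le_mul_of_one_le_left hypos.le hB.le), hψBy1]
  have step4 : (ψ (B * y)) ^ 2 ≤ ψ (C * (B * y)) := by
    apply hΔ
    have : x₀ ≤ B * y := le_trans hx (le_trans hxy (le_mul_of_one_le_left hypos.le hB.le))
    exact le_trans (le_max_left _ _) this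
  have step5 : ψ (C * (B * y)) ≤ ψ (max C 1 * B * y) := by
    apply orlicz_mono_s7 ψ hψ (by positivity)
    have : C * (B * y) ≤ max C 1 * (B * y) :=
      mul_le_mul_of_nonneg_right (le_max_left _ _) (by positivity)
    linarith [this, mul_assoc (max C 1) B y ▸ this]
  calc ψ (B * x) / ψ x ≤ ψ (B * x) := step1
    _ ≤ ψ (B * y) := step2
    _ ≤ (ψ (B * y)) ^ 2 / ψ y := step3
    _ ≤ ψ (C * (B * y)) / ψ y := by gcongr
    _ ≤ ψ (max C 1 * B * y) / ψ y := by gcongr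
end

section
/- Let ψ be an Orlicz function satisfying the Δ²-condition. For every integer N ≥ 1 and every β ∈ (0,1), there exist A > 0 and h₀ ∈ (0,1) such that 1/ψ(A·ψ⁻¹(1/h^N)) ≤ h^{1/β} for every 0 < h < h₀. -/
open Set Filter

/-- if `ψ` is an Orlicz function satisfying the Delta^2-condition, then for
every `N ≥ 1` and `β ∈ (0,1)` there are `A > 0` and `h₀ ∈ (0,1)` with
`1 / ψ (A ψ⁻¹(1/h^N)) ≤ h^(1/β)` for every `0 < h < h₀`. -/
theorem stmt11 (ψ ψinv : ℝ → ℝ) (hψ : OrliczFunction ψ) (hinv : OrliczInverse ψ ψinv)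
    (hΔ : DeltaSquare ψ) (N : ℕ) (hN : 1 ≤ N) (β : ℝ) (hβ : β ∈ Set.Ioo (0:ℝ) 1) :
    ∃ A > (0:ℝ), ∃ h₀ ∈ Set.Ioo (0:ℝ) 1, ∀ h : ℝ, 0 < h → h < h₀ →
      1 / ψ (A * ψinv (1 / h ^ N)) ≤ h ^ (1 / β) := by
  obtain ⟨hconv, hnonneg, hzero, hcont, htend⟩ := hψ
  obtain ⟨hinv1, hinv2, hinv3⟩ := hinv
  obtain ⟨C, hCpos, x₀, hx₀pos, hΔ2⟩ := hΔ
  obtain ⟨hβ0, hβ1⟩ := hβ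
  -- ψ is positive on (0,∞)
  have hpos : ∀ y : ℝ, 0 < y → 0 < ψ y := by
    intro y hy
    have hmem0 : (0:ℝ) ∈ Ici (0:ℝ) := self_mem_Ici
    have hmemy : y ∈ Ici (0:ℝ) := le_of_lt hy
    have hne : (0:ℝ) ≠ y := ne_of_lt hy
    have h2 := hconv.2 hmem0 hmemy hne (by norm_num : (0:ℝ) < 1/2)
      (by norm_num : (0:ℝ) < 1/2) (by norm_num)
    simp only [smul_eq_mul, mul_zero, zero_add, hzero] at h2
    have hnn : 0 ≤ ψ (1/2 * y) := hnonneg _ (Set.mem_Ici.mpr (by positivity))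
    nlinarith
  -- ψ is strictly monotone on [0,∞)
  have hmono : ∀ x y : ℝ, 0 ≤ x → x < y → ψ x < ψ y := by
    intro x y hx hxy
    have hy : 0 < y := lt_of_le_of_lt hx hxy
    rcases eq_or_lt_of_le hx with h | h
    · rw [← h, hzero]; exact hpos y hy
    · have hmem0 : (0:ℝ) ∈ Ici (0:ℝ) := self_mem_Ici
      have hmemy : y ∈ Ici (0:ℝ) := le_of_lt hy
      have hne : (0:ℝ) ≠ y := ne_of_lt hy
      have ha : 0 < 1 - x / y := by
        have : x / y < 1 := (div_lt_one hy).mpr hxy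
        linarith
      have hb : 0 < x / y := div_pos h hy
      have h2 := hconv.2 hmem0 hmemy hne ha hb (by ring)
      simp only [smul_eq_mul, mul_zero, zero_add, hzero] at h2
      have hxy' : (x / y) * y = x := div_mul_cancel₀ x (ne_of_gt hy)
      rw [hxy'] at h2
      have hψy : 0 < ψ y := hpos y hy
      nlinarith [(div_lt_one hy).mpr hxy]
  have hmono' : ∀ x y : ℝ, 0 ≤ x → x ≤ y → ψ x ≤ ψ y := by
    intro x y hx hxy
    rcases eq_or_lt_of_le hxy with h | h
    · rw [h]
    · exact le_of_lt (hmono x y hx h)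
  -- find x₁ ≥ max(x₀, 2) with ψ x₁ ≥ x₁
  obtain ⟨b, hb⟩ := (htend.eventually_ge_atTop 1).exists_forall_of_atTop
  set x₁ : ℝ := max (max b x₀) 2 with hx₁def
  have hx₁2 : (2:ℝ) ≤ x₁ := le_max_right _ _
  have hx₁pos : (0:ℝ) < x₁ := by linarith
  have hx₁x₀ : x₀ ≤ x₁ := le_trans (le_max_right _ _) (le_max_left _ _)
  have hψx₁ : x₁ ≤ ψ x₁ := by
    have h1 := hb x₁ (le_trans (le_max_left _ _) (le_max_left _ _))
    have := (le_div_iff₀ hx₁pos).mp h1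
    linarith
  -- C > 1
  have hC1 : 1 < C := by
    by_contra hc
    push_neg at hc
    have h1 := hΔ2 x₁ hx₁x₀
    have h2 : ψ (C * x₁) ≤ ψ x₁ := by
      apply hmono' _ _ (by positivity)
      nlinarith
    nlinarith
  -- iteration of Δ²
  have hiter : ∀ j : ℕ, ∀ x : ℝ, x₁ ≤ x → ψ x ^ (2 ^ j) ≤ ψ (C ^ j * x) := by
    intro j
    induction j with
    | zero => intro x hx; simp
    | succ j ih =>
      intro x hx
      have hxpos : 0 < x := lt_of_lt_of_le hx₁pos hx
      have hCj1 : (1:ℝ) ≤ C ^ j := one_le_pow₀ (le_of_lt hC1)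
      have hCjx : x₀ ≤ C ^ j * x := by nlinarith
      have h1 := hΔ2 (C ^ j * x) hCjx
      have h2 := ih x hx
      have h3 : 0 ≤ ψ x := hnonneg x (le_of_lt hxpos)
      have h4 : ψ x ^ (2 ^ (j+1)) = (ψ x ^ (2 ^ j)) ^ 2 := by
        rw [← pow_mul]; ring_nf
      rw [h4]
      calc (ψ x ^ (2 ^ j)) ^ 2 ≤ (ψ (C ^ j * x)) ^ 2 := by
            apply pow_le_pow_left₀ (by positivity) h2
        _ ≤ ψ (C * (C ^ j * x)) := h1
        _ = ψ (C ^ (j+1) * x) := by ring_nf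
  -- choose k with 1/(N β) < 2^k
  obtain ⟨k, hk⟩ := pow_unbounded_of_one_lt (1 / ((N:ℝ) * β)) (by norm_num : (1:ℝ) < 2)
  refine ⟨C ^ k, by positivity, ?_⟩
  set M : ℝ := max (ψ x₁) 1 with hMdef
  have hM1 : (1:ℝ) ≤ M := le_max_right _ _
  have hMpos : (0:ℝ) < M := by linarith
  refine ⟨min (1/2) (1/M), ⟨by positivity, lt_of_le_of_lt (min_le_left _ _) (by norm_num)⟩, ?_⟩
  intro h hh0 hh1
  have hh12 : h < 1/2 := lt_of_lt_of_le hh1 (min_le_left _ _)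
  have hhM : h < 1/M := lt_of_lt_of_le hh1 (min_le_right _ _)
  have hhlt1 : h < 1 := by linarith
  have hhNpos : 0 < h ^ N := pow_pos hh0 N
  -- t := 1/h^N ≥ M
  have hpowle : h ^ N ≤ h := by
    calc h ^ N ≤ h ^ 1 := pow_le_pow_of_le_one (le_of_lt hh0) (le_of_lt hhlt1) hN
      _ = h := pow_one h
  have htM : M ≤ 1 / h ^ N := by
    have h1 : M ≤ 1 / h := by
      rw [le_div_iff₀ hh0]
      calc M * h ≤ M * (1/M) := by nlinarith
        _ = 1 := by field_simp
    calc M ≤ 1 / h := h1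
      _ ≤ 1 / h ^ N := by
        apply one_div_le_one_div_of_le hhNpos hpowle
  set t : ℝ := 1 / h ^ N with htdef
  have htpos : 0 < t := by positivity
  have ht1 : (1:ℝ) ≤ t := le_trans hM1 htM
  have htψ : ψ x₁ ≤ t := le_trans (le_max_left _ _) htM
  set u : ℝ := ψinv t with hudef
  have hupos : 0 ≤ u := hinv3 t (le_of_lt htpos)
  have hψu : ψ u = t := hinv2 t (le_of_lt htpos)
  have hux₁ : x₁ ≤ u := by
    by_contra hc
    push_neg at hc
    have := hmono u x₁ hupos hc
    rw [hψu] at this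
    linarith
  -- main estimate
  have hest : t ^ (2 ^ k : ℕ) ≤ ψ (C ^ k * u) := by
    have := hiter k u hux₁
    rwa [hψu] at this
  have hψAupos : 0 < ψ (C ^ k * u) := by
    apply hpos
    have : (0:ℝ) < x₁ := hx₁pos
    have hCk : (1:ℝ) ≤ C ^ k := one_le_pow₀ (le_of_lt hC1)
    nlinarith
  have hNpos : (0:ℝ) < (N:ℝ) := by exact_mod_cast hN
  -- rpow computation : t ^ (1/(N β)) * h ^ (1/β) = 1
  have hrw : t = h ^ (-(N:ℝ)) := by
    rw [htdef, Real.rpow_neg (le_of_lt hh0), Real.rpow_natCast, one_div]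
  have hkey : t ^ (1 / ((N:ℝ) * β)) * h ^ (1/β) = 1 := by
    rw [hrw, ← Real.rpow_mul (le_of_lt hh0), ← Real.rpow_add hh0]
    have hN0 : (N:ℝ) ≠ 0 := ne_of_gt hNpos
    have hβ0' : β ≠ 0 := ne_of_gt hβ0
    have he : -(N:ℝ) * (1 / ((N:ℝ) * β)) + 1 / β = 0 := by field_simp; ring
    rw [he, Real.rpow_zero]
  have hchain : t ^ (1 / ((N:ℝ) * β)) ≤ ψ (C ^ k * u) := by
    calc t ^ (1 / ((N:ℝ) * β)) ≤ t ^ ((2 ^ k : ℕ) : ℝ) := by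
          apply Real.rpow_le_rpow_of_exponent_le ht1
          push_cast
          linarith
      _ = t ^ (2 ^ k : ℕ) := Real.rpow_natCast t _
      _ ≤ ψ (C ^ k * u) := hest
  rw [div_le_iff₀ hψAupos]
  calc (1:ℝ) = t ^ (1 / ((N:ℝ) * β)) * h ^ (1/β) := hkey.symm
    _ ≤ ψ (C ^ k * u) * h ^ (1/β) :=
        mul_le_mul_of_nonneg_right hchain (Real.rpow_nonneg (le_of_lt hh0) _)
    _ = h ^ (1/β) * ψ (C ^ k * u) := mul_comm _ _
end

section
/- Let ψ be an Orlicz function satisfying the ∇₀-condition, let N(α) > N(β) > 0 and set n = N(β)/(N(α) − N(β)). Then for every B > 1 there exist A > 0 and x₀ > 0 such that ψ(Bx)^{N(α)} ≤ ψ(Ax)^{N(α)−N(β)} · ψ(x)^{N(β)} for every x ≥ x₀. -/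
open Set Filter

lemma orlicz_mono_s13 {ψ : ℝ → ℝ} (hψ : OrliczFunction ψ) {x y : ℝ} (hx : 0 ≤ x) (hxy : x < y) :
    ψ x < ψ y := by
  have hy : 0 < y := lt_of_le_of_lt hx hxy
  have hψy : 0 < ψ y := orlicz_pos hψ hy
  rcases eq_or_lt_of_le hx with h | h
  · rw [← h, hψ.2.2.1]; exact hψy
  · have hconv := hψ.1.2 (show (0:ℝ) ∈ Ici (0:ℝ) from self_mem_Ici)
      (show y ∈ Ici (0:ℝ) from mem_Ici.mpr (le_of_lt hy)) (ne_of_lt hy)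
      (show 0 < 1 - x/y by
        have : x/y < 1 := (div_lt_one hy).mpr hxy; linarith)
      (show 0 < x/y from div_pos h hy) (by ring)
    simp only [smul_eq_mul, mul_zero, zero_add, hψ.2.2.1, mul_zero] at hconv
    rw [div_mul_cancel₀ _ (ne_of_gt hy)] at hconv
    have : x/y < 1 := (div_lt_one hy).mpr hxy
    nlinarith

lemma orlicz_iter {ψ : ℝ → ℝ} (hψ : OrliczFunction ψ) {B C x₀ : ℝ} (hB : 1 < B)
    (hC : 1 ≤ C) (hx₀ : 0 < x₀)
    (h : ∀ x y : ℝ, x₀ ≤ x → x ≤ y → ψ (B * x) / ψ x ≤ ψ (C * B * y) / ψ y) :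
    ∀ k : ℕ, ∀ x : ℝ, x₀ ≤ x →
      (ψ (B * x) / ψ x) ^ (k + 1) ≤ ψ ((C * B) ^ (k + 1) * B * x) / ψ (B * x) := by
  have hCB : 1 ≤ C * B := le_trans (by linarith) (le_mul_of_one_le_left (by linarith) hC)
  intro k
  induction k with
  | zero =>
    intro x hx
    have hxpos : 0 < x := lt_of_lt_of_le hx₀ hx
    have := h x (B * x) hx (le_mul_of_one_le_left (le_of_lt hxpos) (le_of_lt hB))
    calc (ψ (B * x) / ψ x) ^ (0 + 1) = ψ (B * x) / ψ x := by ring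
      _ ≤ ψ (C * B * (B * x)) / ψ (B * x) := this
      _ = ψ ((C * B) ^ (0 + 1) * B * x) / ψ (B * x) := by ring_nf
  | succ k ih =>
    intro x hx
    have hxpos : 0 < x := lt_of_lt_of_le hx₀ hx
    set D : ℝ := (C * B) ^ (k + 1) with hD
    have hD1 : 1 ≤ D := one_le_pow₀ hCB
    have hDB : 1 ≤ D * B := by nlinarith
    have hDx : x ≤ D * B * x := by nlinarith
    have h2 := h x (D * B * x) hx hDx
    have hr0 : 0 ≤ ψ (B * x) / ψ x :=
      div_nonneg (le_of_lt (orlicz_pos hψ (by positivity))) (le_of_lt (orlicz_pos hψ hxpos))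
    have hstep : (ψ (B * x) / ψ x) ^ (k + 1 + 1)
        ≤ (ψ (D * B * x) / ψ (B * x)) * (ψ (C * B * (D * B * x)) / ψ (D * B * x)) := by
      rw [pow_succ]
      exact mul_le_mul (ih x hx) h2 hr0
        (div_nonneg (le_of_lt (orlicz_pos hψ (by positivity)))
          (le_of_lt (orlicz_pos hψ (by positivity))))
    have hψD : ψ (D * B * x) ≠ 0 := ne_of_gt (orlicz_pos hψ (by positivity))
    calc (ψ (B * x) / ψ x) ^ (k + 1 + 1)
        ≤ (ψ (D * B * x) / ψ (B * x)) * (ψ (C * B * (D * B * x)) / ψ (D * B * x)) := hstep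
      _ = ψ (C * B * (D * B * x)) / ψ (B * x) := by
          rw [div_mul_div_comm, mul_comm (ψ (D * B * x)) (ψ (C * B * (D * B * x))),
            mul_div_mul_right _ _ hψD]
      _ = ψ ((C * B) ^ (k + 1 + 1) * B * x) / ψ (B * x) := by
          congr 2
          rw [pow_succ, hD]
          ring

/-- if `ψ` is an Orlicz function satisfying the nabla_0-condition and
`N(α) > N(β) > 0`, with `n = N(β)/(N(α)−N(β))`, then for every `B > 1` there are `A > 0`
and `x₀ > 0` such that `ψ(Bx)^{N(α)} ≤ ψ(Ax)^{N(α)−N(β)} · ψ(x)^{N(β)}` for all `x ≥ x₀`. -/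
theorem stmt13 (ψ : ℝ → ℝ) (hψ : OrliczFunction ψ) (hnabla : Nabla0 ψ)
    (Nα Nβ : ℝ) (hNβ : 0 < Nβ) (hNβα : Nβ < Nα) (n : ℝ) (hdef : n = Nβ / (Nα - Nβ)) :
    ∀ B > (1:ℝ), ∃ A > (0:ℝ), ∃ x₀ > (0:ℝ), ∀ x ≥ x₀,
      ψ (B * x) ^ Nα ≤ ψ (A * x) ^ (Nα - Nβ) * ψ x ^ Nβ := by
  intro B hB
  obtain ⟨C, hC, x₀, hx₀, h⟩ := hnabla B hB
  have hsub : 0 < Nα - Nβ := by linarith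
  have hn : 0 < n := by rw [hdef]; positivity
  set m : ℕ := ⌈n⌉₊ with hm
  obtain ⟨k, hk⟩ : ∃ k : ℕ, m = k + 1 := by
    refine ⟨m - 1, ?_⟩
    have : 1 ≤ m := Nat.one_le_ceil_iff.mpr hn
    omega
  have hCB : 1 ≤ C * B := le_trans (by linarith) (le_mul_of_one_le_left (by linarith) hC)
  refine ⟨(C * B) ^ m * B, by positivity, x₀, hx₀, fun x hx => ?_⟩
  have hxpos : 0 < x := lt_of_lt_of_le hx₀ hx
  have hp : 0 < ψ x := orlicz_pos hψ hxpos
  have hq : 0 < ψ (B * x) := orlicz_pos hψ (by positivity)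
  have hs : 0 < ψ ((C * B) ^ m * B * x) := orlicz_pos hψ (by positivity)
  set r : ℝ := ψ (B * x) / ψ x with hr
  have hr1 : 1 ≤ r := by
    rw [hr, le_div_iff₀ hp, one_mul]
    exact le_of_lt (orlicz_mono_s13 hψ (le_of_lt hxpos) (by nlinarith))
  -- r ^ n ≤ r ^ m ≤ ψ(Ax)/ψ(Bx)
  have hiter : r ^ (m : ℕ) ≤ ψ ((C * B) ^ m * B * x) / ψ (B * x) := by
    rw [hk]; exact orlicz_iter hψ hB hC hx₀ h k x hx
  have hrn : r ^ n ≤ ψ ((C * B) ^ m * B * x) / ψ (B * x) := by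
    calc r ^ n ≤ r ^ (m : ℝ) :=
          Real.rpow_le_rpow_of_exponent_le hr1 (Nat.le_ceil n)
      _ = r ^ (m : ℕ) := Real.rpow_natCast r m
      _ ≤ _ := hiter
  -- raise to power Nα - Nβ
  have key : r ^ Nβ ≤ (ψ ((C * B) ^ m * B * x) / ψ (B * x)) ^ (Nα - Nβ) := by
    have h1 : (r ^ n) ^ (Nα - Nβ) ≤ (ψ ((C * B) ^ m * B * x) / ψ (B * x)) ^ (Nα - Nβ) :=
      Real.rpow_le_rpow (Real.rpow_nonneg (by positivity) n) hrn (le_of_lt hsub)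
    rwa [← Real.rpow_mul (le_trans zero_le_one hr1),
      show n * (Nα - Nβ) = Nβ by rw [hdef]; field_simp] at h1
  -- conclude
  have hrpow : r ^ Nβ = ψ (B * x) ^ Nβ / ψ x ^ Nβ := Real.div_rpow (le_of_lt hq) (le_of_lt hp) Nβ
  have hdiv : (ψ ((C * B) ^ m * B * x) / ψ (B * x)) ^ (Nα - Nβ)
      = ψ ((C * B) ^ m * B * x) ^ (Nα - Nβ) / ψ (B * x) ^ (Nα - Nβ) :=
    Real.div_rpow (le_of_lt hs) (le_of_lt hq) (Nα - Nβ)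
  rw [hrpow, hdiv] at key
  have hq1 : 0 < ψ x ^ Nβ := Real.rpow_pos_of_pos hp _
  have hq2 : 0 < ψ (B * x) ^ (Nα - Nβ) := Real.rpow_pos_of_pos hq _
  rw [div_le_div_iff₀ hq1 hq2] at key
  calc ψ (B * x) ^ Nα = ψ (B * x) ^ Nβ * ψ (B * x) ^ (Nα - Nβ) := by
        rw [← Real.rpow_add hq]; ring_nf
    _ ≤ ψ ((C * B) ^ m * B * x) ^ (Nα - Nβ) * ψ x ^ Nβ := key
end

section
/- If ψ is an Orlicz function satisfying the Δ²-condition, then for every a > 1 there exist C > 0 and x₀ > 0 such that ψ⁻¹(x^a) ≤ C·ψ⁻¹(x) for every x ≥ x₀. -/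
open Set Filter

/-- if `ψ` is an Orlicz function satisfying the Delta^2-condition, then for
every `a > 1` there are `C > 0` and `x₀ > 0` with `ψ⁻¹(x^a) ≤ C · ψ⁻¹(x)` for `x ≥ x₀`. -/
theorem stmt14 (ψ ψinv : ℝ → ℝ) (hψ : OrliczFunction ψ) (hinv : OrliczInverse ψ ψinv)
    (hΔ : DeltaSquare ψ) :
    ∀ a > (1:ℝ), ∃ C > (0:ℝ), ∃ x₀ > (0:ℝ), ∀ x ≥ x₀, ψinv (x ^ a) ≤ C * ψinv x := by
  obtain ⟨hconv, hnn, h0, _, _⟩ := hψ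
  obtain ⟨hli, hri, hinn⟩ := hinv
  -- ψ is strictly increasing on [0,∞)
  have key : ∀ u v : ℝ, 0 < u → u < v → ψ u < u / v * ψ v := by
    intro u v hu huv
    have hv : 0 < v := hu.trans huv
    have h1 : u / v < 1 := (div_lt_one hv).2 huv
    have := hconv.2 (self_mem_Ici) (show v ∈ Ici (0:ℝ) from le_of_lt hv)
      (show (0:ℝ) ≠ v from hv.ne) (show (0:ℝ) < 1 - u / v by linarith)
      (div_pos hu hv) (by ring)
    simp only [smul_eq_mul, mul_zero, h0, add_zero, zero_add] at this
    rw [div_mul_cancel₀ _ hv.ne'] at this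
    linarith [this]
  have hmono : ∀ u v : ℝ, 0 ≤ u → u < v → ψ u < ψ v := by
    intro u v hu huv
    have hv : 0 < v := lt_of_le_of_lt hu huv
    have hvpos : 0 < ψ v := by
      have h2 : 0 < v / 2 := by linarith
      have := key (v / 2) v h2 (by linarith)
      have hnn2 := hnn (v / 2) (le_of_lt h2)
      nlinarith [div_pos h2 hv]
    rcases eq_or_lt_of_le hu with h | h
    · rw [← h, h0]; exact hvpos
    · have := key u v h huv
      have huv1 : u / v ≤ 1 := le_of_lt ((div_lt_one hv).2 huv)
      nlinarith
  have hmono' : ∀ u v : ℝ, 0 ≤ u → u ≤ v → ψ u ≤ ψ v := by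
    intro u v hu huv
    rcases eq_or_lt_of_le huv with h | h
    · rw [h]
    · exact le_of_lt (hmono u v hu h)
  -- ψinv is monotone on [0,∞)
  have hinvmono : ∀ y z : ℝ, 0 ≤ y → y ≤ z → ψinv y ≤ ψinv z := by
    intro y z hy hyz
    by_contra h
    push_neg at h
    have hz : 0 ≤ z := hy.trans hyz
    have := hmono (ψinv z) (ψinv y) (hinn z hz) h
    rw [hri y hy, hri z hz] at this
    linarith
  -- the basic step from Δ²
  obtain ⟨C', hC', x₀', hx₀', hΔ'⟩ := hΔ
  set C : ℝ := max C' 1 with hCdef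
  have hC1 : (1:ℝ) ≤ C := le_max_right _ _
  have hC0 : (0:ℝ) < C := lt_of_lt_of_le one_pos hC1
  set y₀ : ℝ := max (ψ (max x₀' 1)) 1 with hy₀def
  have hy₀1 : (1:ℝ) ≤ y₀ := le_max_right _ _
  have hstep : ∀ y : ℝ, y₀ ≤ y → ψinv (y ^ 2) ≤ C * ψinv y := by
    intro y hy
    have hy0 : (0:ℝ) ≤ y := le_trans (by linarith) hy
    set u : ℝ := ψinv y with hu
    have hu0 : 0 ≤ u := hinn y hy0
    have hux : x₀' ≤ u := by
      by_contra h
      push_neg at h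
      have h1 : ψ u < ψ x₀' := hmono u x₀' hu0 h
      have h2 : ψ x₀' ≤ ψ (max x₀' 1) := hmono' _ _ (le_of_lt hx₀') (le_max_left _ _)
      rw [hri y hy0] at h1
      have : ψ (max x₀' 1) ≤ y := le_trans (le_max_left _ _) hy
      linarith
    have h1 : (ψ u) ^ 2 ≤ ψ (C' * u) := hΔ' u hux
    have h2 : ψ (C' * u) ≤ ψ (C * u) := by
      apply hmono' _ _ (mul_nonneg (le_of_lt hC') hu0)
      exact mul_le_mul_of_nonneg_right (le_max_left _ _) hu0
    rw [hri y hy0] at h1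
    have h3 : ψinv (y ^ 2) ≤ ψinv (ψ (C * u)) :=
      hinvmono _ _ (sq_nonneg y) (le_trans h1 h2)
    rwa [hli (C * u) (mul_nonneg (le_of_lt hC0) hu0)] at h3
  -- iterate
  have hiter : ∀ n : ℕ, ∃ Cn : ℝ, 1 ≤ Cn ∧ ∀ y : ℝ, y₀ ≤ y →
      ψinv (y ^ (2 ^ n)) ≤ Cn * ψinv y := by
    intro n
    induction n with
    | zero => exact ⟨1, le_refl 1, fun y _ => by simp⟩
    | succ n ih =>
      obtain ⟨Cn, hCn1, hCn⟩ := ih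
      refine ⟨C * Cn, by nlinarith, fun y hy => ?_⟩
      have hy1 : (1:ℝ) ≤ y := le_trans hy₀1 hy
      have hpow : y₀ ≤ y ^ (2 ^ n) :=
        le_trans hy (le_self_pow₀ hy1 (pow_pos (two_pos : (0:ℕ) < 2) n).ne')
      have h1 : ψinv ((y ^ (2 ^ n)) ^ 2) ≤ C * ψinv (y ^ (2 ^ n)) := hstep _ hpow
      have h2 : ψinv (y ^ (2 ^ n)) ≤ Cn * ψinv y := hCn y hy
      have h3 : y ^ (2 ^ (n + 1)) = (y ^ (2 ^ n)) ^ 2 := by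
        rw [← pow_mul, pow_succ]
      rw [h3]
      calc ψinv ((y ^ (2 ^ n)) ^ 2) ≤ C * ψinv (y ^ (2 ^ n)) := h1
        _ ≤ C * (Cn * ψinv y) := mul_le_mul_of_nonneg_left h2 (le_of_lt hC0)
        _ = C * Cn * ψinv y := by ring
  -- conclude
  intro a ha
  obtain ⟨n, hn⟩ := pow_unbounded_of_one_lt (y := 2) a one_lt_two
  obtain ⟨Cn, hCn1, hCn⟩ := hiter n
  refine ⟨Cn, by linarith, y₀, by linarith, fun x hx => ?_⟩
  have hx1 : (1:ℝ) ≤ x := le_trans hy₀1 hx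
  have h1 : x ^ a ≤ x ^ ((2:ℝ) ^ n) :=
    Real.rpow_le_rpow_of_exponent_le hx1 (le_of_lt hn)
  have h2 : x ^ ((2:ℝ) ^ n) = x ^ (2 ^ n : ℕ) := by
    rw [← Real.rpow_natCast x (2 ^ n)]
    norm_num
  have h3 : ψinv (x ^ a) ≤ ψinv (x ^ (2 ^ n : ℕ)) := by
    apply hinvmono _ _ (Real.rpow_nonneg (by linarith) a)
    rw [← h2]; exact h1
  exact le_trans h3 (hCn x hx)
end
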